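/- arXiv:0902.3956 — 6 statements merged into one kernel-verified Lean document; each statement's English description precedes it below -/
import Mathlib

section
/- Suppose a countable Borel equivalence relation R on X acts on an R-arboretum A over X admitting an orientation A^{1+} which, as an R-fibered space, is isomorphic to the canonical left R-fibered space; identify A^{1+} with R via this isomorphism and let d(x) = (x, x) be the diagonal section. Assume that the R_{A⁰}-saturations of o(d(X)) and of t(d(X)) form a Borel partition of the vertex space A⁰. Then R is the free product of the stabilizers of the two vertex sections: R = Stab_R(o∘d) ⋆ Stab_R(t∘d). -/
open Set

universe u

section Relations

variable {X : Type u} [MeasurableSpace X]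

/-- A countable Borel equivalence relation on `X` : a Borel subset of `X × X` which is an
equivalence relation all of whose classes are countable. -/
def IsCBER (R : Set (X × X)) : Prop :=
  MeasurableSet R ∧ (∀ x, (x, x) ∈ R) ∧ (∀ ⦃x y⦄, (x, y) ∈ R → (y, x) ∈ R) ∧
    (∀ ⦃x y z⦄, (x, y) ∈ R → (y, z) ∈ R → (x, z) ∈ R) ∧
    ∀ x, {y | (x, y) ∈ R}.Countable

/-- A subrelation of `R` defined on the Borel set `A` : a Borel equivalence relation on `A`
contained in `R`. -/
def IsSubrelOn (R S : Set (X × X)) (A : Set X) : Prop :=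
  MeasurableSet A ∧ MeasurableSet S ∧ S ⊆ R ∧ S ⊆ A ×ˢ A ∧
    (∀ x ∈ A, (x, x) ∈ S) ∧ (∀ ⦃x y⦄, (x, y) ∈ S → (y, x) ∈ S) ∧
    ∀ ⦃x y z⦄, (x, y) ∈ S → (y, z) ∈ S → (x, z) ∈ S

/-- A subrelation of `R`, defined on some Borel subset of `X`. -/
def IsSubrel (R S : Set (X × X)) : Prop :=
  ∃ A : Set X, IsSubrelOn R S A

/-- Restriction `R|_A = R ∩ (A × A)`. -/
def Restrict (R : Set (X × X)) (A : Set X) : Set (X × X) := R ∩ A ×ˢ A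

/-- The `R`-saturation of a set `A`. -/
def Saturation (R : Set (X × X)) (A : Set X) : Set X := {x | ∃ a ∈ A, (a, x) ∈ R}

/-- A Borel set meeting every class of `R` : a complete domain. -/
def IsCompleteDomain (R : Set (X × X)) (D : Set X) : Prop :=
  MeasurableSet D ∧ (∀ d ∈ D, (d, d) ∈ R) ∧ ∀ x, (x, x) ∈ R → ∃ d ∈ D, (x, d) ∈ R

/-- A Borel set meeting every class of `R` in exactly one point : a fundamental domain. -/
def IsFundamentalDomain (R : Set (X × X)) (D : Set X) : Prop :=
  MeasurableSet D ∧ (∀ d ∈ D, (d, d) ∈ R) ∧ ∀ x, (x, x) ∈ R → ∃! d, d ∈ D ∧ (x, d) ∈ R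

/-- A Borel equivalence relation is smooth if it admits a fundamental domain. -/
def IsSmoothRel (R : Set (X × X)) : Prop := ∃ D, IsFundamentalDomain R D

/-- A graphing of `R` : a symmetric irreflexive Borel subset of `R` generating `R`. -/
def IsGraphing (R G : Set (X × X)) : Prop :=
  MeasurableSet G ∧ G ⊆ R ∧ (∀ ⦃x y⦄, (x, y) ∈ G → (y, x) ∈ G) ∧
    (∀ x, (x, x) ∉ G) ∧
    ∀ p ∈ R, Relation.ReflTransGen (fun a b => (a, b) ∈ G) p.1 p.2

/-- The (simple) graph given by a symmetric irreflexive set of pairs has a cycle : an injective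
closed path of length at least 3. -/
def HasCycle (G : Set (X × X)) : Prop :=
  ∃ (n : ℕ) (c : ℕ → X), 3 ≤ n ∧ (∀ k < n, (c k, c ((k + 1) % n)) ∈ G) ∧
    ∀ k < n, ∀ l < n, c k = c l → k = l

/-- A treeing of `R` : an acyclic graphing. -/
def IsTreeing (R G : Set (X × X)) : Prop := IsGraphing R G ∧ ¬ HasCycle G

/-- `R` is treeable if it admits a treeing. -/
def IsTreeable (R : Set (X × X)) : Prop := ∃ G, IsTreeing R G

/-- `φ` is an element of the full pseudogroup `[[R]]` with (Borel) domain `A` :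
an injective Borel map on `A` whose graph is contained in `R` (its image `φ '' A` is then
automatically Borel and `φ` is a Borel isomorphism of `A` onto `φ '' A`). -/
def MemPseudoGroup (R : Set (X × X)) (A : Set X) (φ : X → X) : Prop :=
  MeasurableSet A ∧ Measurable (A.restrict φ) ∧ Set.InjOn φ A ∧
    ∀ x ∈ A, (x, φ x) ∈ R

/-- Conjugation `φ⁻¹ S φ` of a subrelation `S` (defined on `φ '' A`) by `φ : A → φ '' A`. -/
def Conj (S : Set (X × X)) (A : Set X) (φ : X → X) : Set (X × X) :=
  {p | p.1 ∈ A ∧ p.2 ∈ A ∧ (φ p.1, φ p.2) ∈ S}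

/-- Two subrelations of `R` are stably conjugate if they admit complete domains on which their
restrictions are conjugate by an element of the full pseudogroup of `R`. -/
def StablyConjugate (R S S' : Set (X × X)) : Prop :=
  ∃ (D D' : Set X) (φ : X → X),
    IsCompleteDomain S D ∧ IsCompleteDomain S' D' ∧
    MemPseudoGroup R D' φ ∧ φ '' D' = D ∧
    Restrict S' D' = Conj (Restrict S D) D' φ

/-- `R` is the free product of the countable family `Rf` : the `Rf i` generate `R` and every
cyclic word with consecutive pairs in distinct factors contains a trivial pair.
(Here a word with `m` consecutive pairs is given by its `m + 1` points `x 0, …, x m`.) -/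
def IsCtblFreeProduct {ι : Type*} (R : Set (X × X)) (Rf : ι → Set (X × X)) : Prop :=
  (∀ i, Rf i ⊆ R) ∧
    (∀ p ∈ R, Relation.EqvGen (fun a b => ∃ i, (a, b) ∈ Rf i) p.1 p.2) ∧
    ∀ (m : ℕ) (x : ℕ → X) (idx : ℕ → ι),
      1 ≤ m → x m = x 0 →
      (∀ k < m, (x k, x (k + 1)) ∈ Rf (idx k)) →
      (∀ k, k + 1 < m → idx k ≠ idx (k + 1)) →
      ∃ k < m, x k = x (k + 1)

/-- A reduced word with respect to two subrelations `R1`, `R2` : a tuple of points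
`x 0, …, x m` (`m ≥ 1` consecutive pairs) such that every consecutive pair is `R1`- or
`R2`-equivalent, no two successive pairs are `Rj`-equivalent for the same `j`, and
`x 0 ≠ x 1` when there is a single pair. -/
def Reduced2 (R1 R2 : Set (X × X)) (m : ℕ) (x : ℕ → X) : Prop :=
  1 ≤ m ∧
  (∀ k < m, (x k, x (k + 1)) ∈ R1 ∨ (x k, x (k + 1)) ∈ R2) ∧
  (∀ k, k + 1 < m → ¬((x k, x (k + 1)) ∈ R1 ∧ (x (k + 1), x (k + 2)) ∈ R1)) ∧
  (∀ k, k + 1 < m → ¬((x k, x (k + 1)) ∈ R2 ∧ (x (k + 1), x (k + 2)) ∈ R2)) ∧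
  (m = 1 → x 0 ≠ x 1)

/-- `R` is the free product of two subrelations `R1 ⋆ R2` : `R` is the smallest equivalence
relation containing `R1` and `R2` and the endpoints of every reduced word are distinct. -/
def IsFreeProduct2 (R R1 R2 : Set (X × X)) : Prop :=
  R1 ⊆ R ∧ R2 ⊆ R ∧
  (∀ p ∈ R, Relation.EqvGen (fun a b => (a, b) ∈ R1 ∨ (a, b) ∈ R2) p.1 p.2) ∧
  ∀ m x, Reduced2 R1 R2 m x → x m ≠ x 0

/-- A reduced word with respect to `R1`, `R2` and a common subrelation `R3` : moreover no
consecutive pair is `R3`-equivalent as soon as there are at least two pairs. -/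
def Reduced3 (R1 R2 R3 : Set (X × X)) (m : ℕ) (x : ℕ → X) : Prop :=
  Reduced2 R1 R2 m x ∧ (1 < m → ∀ k < m, (x k, x (k + 1)) ∉ R3)

/-- `R` is the amalgamated product `R1 ⋆_{R3} R2` of `R1` and `R2` over the common
subrelation `R3`. -/
def IsAmalgam (R R1 R2 R3 : Set (X × X)) : Prop :=
  R1 ⊆ R ∧ R2 ⊆ R ∧ R3 ⊆ R1 ∧ R3 ⊆ R2 ∧
  (∀ p ∈ R, Relation.EqvGen (fun a b => (a, b) ∈ R1 ∨ (a, b) ∈ R2) p.1 p.2) ∧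
  ∀ m x, Reduced3 R1 R2 R3 m x → x m ≠ x 0

end Relations

/-- An `R`-fibered space over `X` : a standard Borel space `F` with a Borel,
countable-to-one surjection `π` onto `X`, equipped with a Borel action of `R`. -/
structure RFibSp (X : Type u) [MeasurableSpace X] (R : Set (X × X)) where
  F : Type u
  [mF : MeasurableSpace F]
  [sbF : StandardBorelSpace F]
  π : F → X
  act : X → X → F → F
  measurable_π : Measurable π
  surjective_π : Function.Surjective π
  countable_fibers : ∀ x : X, {t : F | π t = x}.Countable
  measurable_act :
    Measurable fun q : {q : (X × X) × F // q.1 ∈ R ∧ π q.2 = q.1.2} =>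
      act q.1.1.1 q.1.1.2 q.1.2
  act_proj : ∀ ⦃x y : X⦄ (t : F), (x, y) ∈ R → π t = y → π (act x y t) = x
  act_id : ∀ (z : X) (t : F), π t = z → act z z t = t
  act_comp : ∀ ⦃x y z : X⦄ (t : F), (x, y) ∈ R → (y, z) ∈ R → π t = z →
      act x y (act y z t) = act x z t

attribute [instance] RFibSp.mF RFibSp.sbF

namespace RFibSp

variable {X : Type u} [MeasurableSpace X] {R : Set (X × X)}

/-- The induced equivalence relation `R_F` on `F` : `t` and `t'` are related iff
`(π t', π t) · t = t'`. -/
def rel (E : RFibSp X R) : Set (E.F × E.F) :=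
  {p | (E.π p.2, E.π p.1) ∈ R ∧ E.act (E.π p.2) (E.π p.1) p.1 = p.2}

/-- The `R_F`-saturation of a subset of `F`. -/
def sat (E : RFibSp X R) (B : Set E.F) : Set E.F :=
  {t | ∃ b ∈ B, (b, t) ∈ E.rel}

/-- A partial section of `E` defined on the Borel set `A`. -/
def IsPartialSection (E : RFibSp X R) (A : Set X) (s : X → E.F) : Prop :=
  MeasurableSet A ∧ Measurable (A.restrict s) ∧ ∀ x ∈ A, E.π (s x) = x

/-- The stabilizer of a partial section : `x ∼ y` iff `(y, x) · s x = s y`. -/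
def stab (E : RFibSp X R) (A : Set X) (s : X → E.F) : Set (X × X) :=
  {p | p.1 ∈ A ∧ p.2 ∈ A ∧ (p.2, p.1) ∈ R ∧ E.act p.2 p.1 (s p.1) = s p.2}

/-- A partial section is saturating if the `R_F`-saturation of its image is all of `F`. -/
def IsSaturating (E : RFibSp X R) (A : Set X) (s : X → E.F) : Prop :=
  ∀ t : E.F, ∃ x ∈ A, (s x, t) ∈ E.rel

/-- Quasi-free action : the stabilizer of every partial section is smooth. -/
def IsQuasiFree (E : RFibSp X R) : Prop :=
  ∀ (A : Set X) (s : X → E.F), E.IsPartialSection A s → IsSmoothRel (E.stab A s)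

/-- A morphism of `R`-fibered spaces. -/
def IsMorphism (E E' : RFibSp X R) (f : E.F → E'.F) : Prop :=
  Measurable f ∧ (∀ t, E'.π (f t) = E.π t) ∧
    ∀ ⦃x y : X⦄ (t : E.F), (x, y) ∈ R → E.π t = y →
      f (E.act x y t) = E'.act x y (f t)

end RFibSp

/-- An `R`-field of Borel graphs over `X` : vertex and edge `R`-fibered spaces together with
origin, terminal and edge-reversal morphisms. -/
structure RGraphField (X : Type u) [MeasurableSpace X] (R : Set (X × X)) where
  V : RFibSp X R
  Edg : RFibSp X R
  o : Edg.F → V.F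
  t : Edg.F → V.F
  bar : Edg.F → Edg.F
  o_mor : RFibSp.IsMorphism Edg V o
  t_mor : RFibSp.IsMorphism Edg V t
  bar_mor : RFibSp.IsMorphism Edg Edg bar
  bar_bar : ∀ a, bar (bar a) = a
  bar_ne : ∀ a, bar a ≠ a
  o_bar : ∀ a, o (bar a) = t a

namespace RGraphField

variable {X : Type u} [MeasurableSpace X] {R : Set (X × X)}

/-- Adjacency in the fiber over `x`. -/
def Adj (G : RGraphField X R) (x : X) (v w : G.V.F) : Prop :=
  ∃ e : G.Edg.F, G.Edg.π e = x ∧ G.o e = v ∧ G.t e = w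

/-- The fiber over `x` is connected. -/
def FiberConnected (G : RGraphField X R) (x : X) : Prop :=
  ∀ v w : G.V.F, G.V.π v = x → G.V.π w = x → Relation.ReflTransGen (G.Adj x) v w

/-- The fiber over `x` contains a circuit : a reduced closed edge path of positive length. -/
def FiberHasCircuit (G : RGraphField X R) (x : X) : Prop :=
  ∃ (n : ℕ) (c : ℕ → G.Edg.F), 0 < n ∧ (∀ k < n, G.Edg.π (c k) = x) ∧
    (∀ k < n, G.t (c k) = G.o (c ((k + 1) % n))) ∧
    ∀ k < n, c ((k + 1) % n) ≠ G.bar (c k)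

/-- An `R`-arboretum : every fiber is a (nonempty) tree. -/
def IsArboretum (G : RGraphField X R) : Prop :=
  ∀ x : X, G.FiberConnected x ∧ ¬ G.FiberHasCircuit x

/-- An orientation of the edge space : an `R`-invariant Borel set of edges containing exactly
one edge of each pair `{a, ā}`. -/
def IsOrientation (G : RGraphField X R) (P : Set G.Edg.F) : Prop :=
  MeasurableSet P ∧ (∀ a : G.Edg.F, a ∈ P ↔ G.bar a ∉ P) ∧
    ∀ ⦃x y : X⦄ (a : G.Edg.F), (x, y) ∈ R → G.Edg.π a = y → a ∈ P →
      G.Edg.act x y a ∈ P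

end RGraphField

section FPAux

namespace FPAux

variable {X : Type u} [MeasurableSpace X] {R : Set (X × X)}

/-- The positively oriented edge of the fiber over `x₀` attached to the class point `z`. -/
def ed (G : RGraphField X R) (s : X → G.Edg.F) (x₀ z : X) : G.Edg.F :=
  G.Edg.act x₀ z (s z)

/-- The origin of `ed`. -/
def Ov (G : RGraphField X R) (s : X → G.Edg.F) (x₀ z : X) : G.V.F :=
  G.V.act x₀ z (G.o (s z))

/-- The terminus of `ed`. -/
def Tv (G : RGraphField X R) (s : X → G.Edg.F) (x₀ z : X) : G.V.F :=
  G.V.act x₀ z (G.t (s z))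

variable (G : RGraphField X R) (s : X → G.Edg.F) (P : Set G.Edg.F)

lemma t_bar (a : G.Edg.F) : G.t (G.bar a) = G.o a := by
  rw [← G.o_bar, G.bar_bar]

lemma pi_os (hsec : ∀ z, G.Edg.π (s z) = z) (z : X) : G.V.π (G.o (s z)) = z := by
  rw [G.o_mor.2.1, hsec]

lemma pi_ts (hsec : ∀ z, G.Edg.π (s z) = z) (z : X) : G.V.π (G.t (s z)) = z := by
  rw [G.t_mor.2.1, hsec]

lemma pi_ed (hsec : ∀ z, G.Edg.π (s z) = z) {x₀ z : X} (hz : (x₀, z) ∈ R) :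
    G.Edg.π (ed G s x₀ z) = x₀ :=
  G.Edg.act_proj _ hz (hsec z)

lemma o_ed (hsec : ∀ z, G.Edg.π (s z) = z) {x₀ z : X} (hz : (x₀, z) ∈ R) :
    G.o (ed G s x₀ z) = Ov G s x₀ z :=
  G.o_mor.2.2 (s z) hz (hsec z)

lemma t_ed (hsec : ∀ z, G.Edg.π (s z) = z) {x₀ z : X} (hz : (x₀, z) ∈ R) :
    G.t (ed G s x₀ z) = Tv G s x₀ z :=
  G.t_mor.2.2 (s z) hz (hsec z)

lemma pi_Ov (hsec : ∀ z, G.Edg.π (s z) = z) {x₀ z : X} (hz : (x₀, z) ∈ R) :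
    G.V.π (Ov G s x₀ z) = x₀ :=
  G.V.act_proj _ hz (pi_os G s hsec z)

lemma pi_Tv (hsec : ∀ z, G.Edg.π (s z) = z) {x₀ z : X} (hz : (x₀, z) ∈ R) :
    G.V.π (Tv G s x₀ z) = x₀ :=
  G.V.act_proj _ hz (pi_ts G s hsec z)

lemma Ov_sat (hsec : ∀ z, G.Edg.π (s z) = z) {x₀ z : X} (hz : (x₀, z) ∈ R) :
    Ov G s x₀ z ∈ G.V.sat (Set.range fun x => G.o (s x)) := by
  refine ⟨G.o (s z), ⟨z, rfl⟩, ?_, ?_⟩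
  · rw [pi_Ov G s hsec hz, pi_os G s hsec]; exact hz
  · rw [pi_Ov G s hsec hz, pi_os G s hsec]; rfl

lemma Tv_sat (hsec : ∀ z, G.Edg.π (s z) = z) {x₀ z : X} (hz : (x₀, z) ∈ R) :
    Tv G s x₀ z ∈ G.V.sat (Set.range fun x => G.t (s x)) := by
  refine ⟨G.t (s z), ⟨z, rfl⟩, ?_, ?_⟩
  · rw [pi_Tv G s hsec hz, pi_ts G s hsec]; exact hz
  · rw [pi_Tv G s hsec hz, pi_ts G s hsec]; rfl

lemma Ov_ne_Tv (hsec : ∀ z, G.Edg.π (s z) = z)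
    (hdisj : Disjoint (G.V.sat (Set.range fun x => G.o (s x)))
      (G.V.sat (Set.range fun x => G.t (s x))))
    {x₀ z w : X} (hz : (x₀, z) ∈ R) (hw : (x₀, w) ∈ R) :
    Ov G s x₀ z ≠ Tv G s x₀ w := fun h =>
  Set.disjoint_left.mp hdisj (Ov_sat G s hsec hz) (by rw [h]; exact Tv_sat G s hsec hw)

lemma mem_stab_iff (hRsymm : ∀ ⦃a b : X⦄, (a, b) ∈ R → (b, a) ∈ R)
    (hRtrans : ∀ ⦃a b c : X⦄, (a, b) ∈ R → (b, c) ∈ R → (a, c) ∈ R)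
    (f : X → G.V.F) (hf : ∀ z, G.V.π (f z) = z) {x₀ z w : X}
    (hz : (x₀, z) ∈ R) (hw : (x₀, w) ∈ R) :
    (z, w) ∈ G.V.stab Set.univ f ↔ G.V.act x₀ z (f z) = G.V.act x₀ w (f w) := by
  constructor
  · rintro ⟨-, -, hwz, hact⟩
    rw [← hact, G.V.act_comp (f z) hw hwz (hf z)]
  · intro h
    have hwz : (w, z) ∈ R := hRtrans (hRsymm hw) hz
    refine ⟨trivial, trivial, hwz, ?_⟩
    have h1 : G.V.act w x₀ (G.V.act x₀ z (f z)) = G.V.act w z (f z) :=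
      G.V.act_comp (f z) (hRsymm hw) hz (hf z)
    have h2 : G.V.act w x₀ (G.V.act x₀ w (f w)) = G.V.act w w (f w) :=
      G.V.act_comp (f w) (hRsymm hw) hw (hf w)
    rw [G.V.act_id w (f w) (hf w)] at h2
    rw [← h1, h, h2]

lemma diag_stab (hRrefl : ∀ x : X, (x, x) ∈ R) (f : X → G.V.F)
    (hf : ∀ z, G.V.π (f z) = z) (z : X) : (z, z) ∈ G.V.stab Set.univ f :=
  ⟨trivial, trivial, hRrefl z, G.V.act_id z (f z) (hf z)⟩

lemma ed_inj (hinj : ∀ ⦃x y x' y' : X⦄, (x, y) ∈ R → (x', y') ∈ R →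
      G.Edg.act x y (s y) = G.Edg.act x' y' (s y') → (x, y) = (x', y'))
    {x₀ z w : X} (hz : (x₀, z) ∈ R) (hw : (x₀, w) ∈ R)
    (h : ed G s x₀ z = ed G s x₀ w) : z = w :=
  congrArg Prod.snd (hinj hz hw h)

lemma classify (hsec : ∀ z, G.Edg.π (s z) = z) (hP : G.IsOrientation P)
    (hsurj : ∀ e ∈ P, ∃ p : X × X, p ∈ R ∧ e = G.Edg.act p.1 p.2 (s p.2))
    {x₀ : X} {a : G.Edg.F} (ha : G.Edg.π a = x₀) :
    ∃ z, (x₀, z) ∈ R ∧ (a = ed G s x₀ z ∨ a = G.bar (ed G s x₀ z)) := by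
  by_cases hp : a ∈ P
  · obtain ⟨p, hpR, he⟩ := hsurj a hp
    have hp1 : p.1 = x₀ := by rw [← ha, he, G.Edg.act_proj _ hpR (hsec p.2)]
    exact ⟨p.2, hp1 ▸ hpR, Or.inl (hp1 ▸ he)⟩
  · have hbar : G.bar a ∈ P := by
      by_contra hb; exact hp ((hP.2.1 a).mpr hb)
    obtain ⟨p, hpR, he⟩ := hsurj (G.bar a) hbar
    have hπb : G.Edg.π (G.bar a) = x₀ := by rw [G.bar_mor.2.1, ha]
    have hp1 : p.1 = x₀ := by rw [← hπb, he, G.Edg.act_proj _ hpR (hsec p.2)]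
    refine ⟨p.2, hp1 ▸ hpR, Or.inr ?_⟩
    have := congrArg G.bar (hp1 ▸ he : G.bar a = ed G s x₀ p.2)
    rwa [G.bar_bar] at this
lemma same_ends (hArb : G.IsArboretum) (hsec : ∀ z, G.Edg.π (s z) = z)
    (hinj : ∀ ⦃x y x' y' : X⦄, (x, y) ∈ R → (x', y') ∈ R →
      G.Edg.act x y (s y) = G.Edg.act x' y' (s y') → (x, y) = (x', y'))
    {x₀ z w : X} (hz : (x₀, z) ∈ R) (hw : (x₀, w) ∈ R)
    (hO : Ov G s x₀ z = Ov G s x₀ w) (hT : Tv G s x₀ z = Tv G s x₀ w) : z = w := by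
  by_contra hne
  have hedne : ed G s x₀ z ≠ ed G s x₀ w := fun h => hne (ed_inj G s hinj hz hw h)
  refine (hArb x₀).2 ⟨2, fun k => match k with
    | 0 => ed G s x₀ z
    | _ + 1 => G.bar (ed G s x₀ w), by norm_num, ?_, ?_, ?_⟩
  · intro k hk
    interval_cases k
    · exact pi_ed G s hsec hz
    · show G.Edg.π (G.bar (ed G s x₀ w)) = x₀
      rw [G.bar_mor.2.1]; exact pi_ed G s hsec hw
  · intro k hk
    interval_cases k
    · show G.t (ed G s x₀ z) = G.o (G.bar (ed G s x₀ w))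
      rw [t_ed G s hsec hz, G.o_bar, t_ed G s hsec hw]; exact hT
    · show G.t (G.bar (ed G s x₀ w)) = G.o (ed G s x₀ z)
      rw [t_bar, o_ed G s hsec hz, o_ed G s hsec hw]; exact hO.symm
  · intro k hk
    interval_cases k
    · show G.bar (ed G s x₀ w) ≠ G.bar (ed G s x₀ z)
      intro h
      have := congrArg G.bar h
      rw [G.bar_bar, G.bar_bar] at this
      exact hedne this.symm
    · show ed G s x₀ z ≠ G.bar (G.bar (ed G s x₀ w))
      rw [G.bar_bar]; exact hedne

lemma ndb (hP : G.IsOrientation P)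
    (hinto : ∀ ⦃x y : X⦄, (x, y) ∈ R → G.Edg.act x y (s y) ∈ P)
    (hinj : ∀ ⦃x y x' y' : X⦄, (x, y) ∈ R → (x', y') ∈ R →
      G.Edg.act x y (s y) = G.Edg.act x' y' (s y') → (x, y) = (x', y'))
    {x₀ z u : X} (hz : (x₀, z) ∈ R) (hu : (x₀, u) ∈ R) (hne : z ≠ u)
    {a b : G.Edg.F}
    (ha : a = ed G s x₀ z ∨ a = G.bar (ed G s x₀ z))
    (hb : b = ed G s x₀ u ∨ b = G.bar (ed G s x₀ u)) : b ≠ G.bar a := by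
  have hedne : ed G s x₀ z ≠ ed G s x₀ u := fun h => hne (ed_inj G s hinj hz hu h)
  have hPz : ed G s x₀ z ∈ P := hinto hz
  have hPu : ed G s x₀ u ∈ P := hinto hu
  rcases ha with rfl | rfl <;> rcases hb with rfl | rfl
  · intro h; exact ((hP.2.1 _).mp hPz) (by rw [← h]; exact hPu)
  · intro h
    have := congrArg G.bar h
    rw [G.bar_bar, G.bar_bar] at this
    exact hedne this.symm
  · intro h; rw [G.bar_bar] at h; exact hedne h.symm
  · intro h; rw [G.bar_bar] at h
    exact ((hP.2.1 _).mp hPu) (by rw [h]; exact hPz)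

lemma shared (hRsymm : ∀ ⦃a b : X⦄, (a, b) ∈ R → (b, a) ∈ R)
    (hRtrans : ∀ ⦃a b c : X⦄, (a, b) ∈ R → (b, c) ∈ R → (a, c) ∈ R)
    (hsec : ∀ z, G.Edg.π (s z) = z)
    (hdisj : Disjoint (G.V.sat (Set.range fun x => G.o (s x)))
      (G.V.sat (Set.range fun x => G.t (s x))))
    {x₀ z u : X} (hz : (x₀, z) ∈ R) (hu : (x₀, u) ∈ R) (v : G.V.F)
    (h1 : v = Ov G s x₀ z ∨ v = Tv G s x₀ z)
    (h2 : v = Ov G s x₀ u ∨ v = Tv G s x₀ u) :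
    (z, u) ∈ G.V.stab Set.univ (fun x => G.o (s x)) ∨
      (z, u) ∈ G.V.stab Set.univ (fun x => G.t (s x)) := by
  rcases h1 with h1 | h1 <;> rcases h2 with h2 | h2
  · exact Or.inl ((mem_stab_iff G hRsymm hRtrans _ (pi_os G s hsec) hz hu).mpr
      (h1.symm.trans h2))
  · exact absurd (h1.symm.trans h2) (Ov_ne_Tv G s hsec hdisj hz hu)
  · exact absurd (h2.symm.trans h1) (Ov_ne_Tv G s hsec hdisj hu hz)
  · exact Or.inr ((mem_stab_iff G hRsymm hRtrans _ (pi_ts G s hsec) hz hu).mpr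
      (h1.symm.trans h2))

lemma adj_inc (hsec : ∀ z, G.Edg.π (s z) = z) (hP : G.IsOrientation P)
    (hsurj : ∀ e ∈ P, ∃ p : X × X, p ∈ R ∧ e = G.Edg.act p.1 p.2 (s p.2))
    {x₀ : X} {v w : G.V.F} (hvw : G.Adj x₀ v w) :
    ∃ y, (x₀, y) ∈ R ∧ (v = Ov G s x₀ y ∨ v = Tv G s x₀ y) ∧
      (w = Ov G s x₀ y ∨ w = Tv G s x₀ y) := by
  obtain ⟨a, ha, hov, htw⟩ := hvw
  obtain ⟨y, hy, h | h⟩ := classify G s P hsec hP hsurj ha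
  · exact ⟨y, hy, Or.inl (by rw [← hov, h, o_ed G s hsec hy]),
      Or.inr (by rw [← htw, h, t_ed G s hsec hy])⟩
  · exact ⟨y, hy, Or.inr (by rw [← hov, h, G.o_bar, t_ed G s hsec hy]),
      Or.inl (by rw [← htw, h, t_bar, o_ed G s hsec hy])⟩

lemma gen_aux (hRsymm : ∀ ⦃a b : X⦄, (a, b) ∈ R → (b, a) ∈ R)
    (hRtrans : ∀ ⦃a b c : X⦄, (a, b) ∈ R → (b, c) ∈ R → (a, c) ∈ R)
    (hsec : ∀ z, G.Edg.π (s z) = z) (hP : G.IsOrientation P)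
    (hsurj : ∀ e ∈ P, ∃ p : X × X, p ∈ R ∧ e = G.Edg.act p.1 p.2 (s p.2))
    (hdisj : Disjoint (G.V.sat (Set.range fun x => G.o (s x)))
      (G.V.sat (Set.range fun x => G.t (s x))))
    {x₀ : X} {v w : G.V.F} (hvw : Relation.ReflTransGen (G.Adj x₀) v w) :
    ∀ {z u : X}, (x₀, z) ∈ R → (x₀, u) ∈ R →
      (v = Ov G s x₀ z ∨ v = Tv G s x₀ z) → (w = Ov G s x₀ u ∨ w = Tv G s x₀ u) →
      Relation.EqvGen (fun a b => (a, b) ∈ G.V.stab Set.univ (fun x => G.o (s x)) ∨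
        (a, b) ∈ G.V.stab Set.univ (fun x => G.t (s x))) z u := by
  induction hvw with
  | refl =>
    intro z u hz hu h1 h2
    exact Relation.EqvGen.rel _ _ (shared G s hRsymm hRtrans hsec hdisj hz hu v h1 h2)
  | @tail b c hab hbc ih =>
    intro z u hz hu h1 h2
    obtain ⟨y, hy, hbi, hci⟩ := adj_inc G s P hsec hP hsurj hbc
    exact Relation.EqvGen.trans _ _ _ (ih hz hy h1 hbi)
      (Relation.EqvGen.rel _ _ (shared G s hRsymm hRtrans hsec hdisj hy hu c hci h2))
lemma no_closed (hR : IsCBER R) (hArb : G.IsArboretum) (hP : G.IsOrientation P)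
    (hsec : ∀ z, G.Edg.π (s z) = z)
    (hinto : ∀ ⦃x y : X⦄, (x, y) ∈ R → G.Edg.act x y (s y) ∈ P)
    (hinj : ∀ ⦃x y x' y' : X⦄, (x, y) ∈ R → (x', y') ∈ R →
      G.Edg.act x y (s y) = G.Edg.act x' y' (s y') → (x, y) = (x', y'))
    (hsurj : ∀ e ∈ P, ∃ p : X × X, p ∈ R ∧ e = G.Edg.act p.1 p.2 (s p.2))
    (hdisj : Disjoint (G.V.sat (Set.range fun x => G.o (s x)))
      (G.V.sat (Set.range fun x => G.t (s x)))) :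
    ∀ (m : ℕ) (w : ℕ → X),
      Reduced2 (G.V.stab Set.univ fun x => G.o (s x))
        (G.V.stab Set.univ fun x => G.t (s x)) m w → w m ≠ w 0 := by
  have hRrefl : ∀ x : X, (x, x) ∈ R := hR.2.1
  have hRsymm : ∀ ⦃a b : X⦄, (a, b) ∈ R → (b, a) ∈ R := hR.2.2.1
  have hRtrans : ∀ ⦃a b c : X⦄, (a, b) ∈ R → (b, c) ∈ R → (a, c) ∈ R := hR.2.2.2.1
  intro m
  induction m using Nat.strong_induction_on with
  | _ m ih =>
  intro w hred hcl
  obtain ⟨hm1, hpairs, h11, h22, hsingle⟩ := hred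
  have pairR : ∀ k, k < m → (w k, w (k+1)) ∈ R := by
    intro k hk
    rcases hpairs k hk with h | h
    · exact hRsymm h.2.2.1
    · exact hRsymm h.2.2.1
  have hwk : ∀ k, k ≤ m → (w 0, w k) ∈ R := by
    intro k
    induction k with
    | zero => exact fun _ => hRrefl _
    | succ k ihk => exact fun hk => hRtrans (ihk (by omega)) (pairR k (by omega))
  rcases Nat.lt_or_ge m 2 with hm2 | hm2
  · have hm : m = 1 := by omega
    subst hm
    exact hsingle rfl hcl.symm
  by_cases htriv : ∃ k, k < m ∧ w k = w (k+1)
  · obtain ⟨k, hk, he⟩ := htriv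
    have hd1 : (w k, w (k+1)) ∈ G.V.stab Set.univ (fun x => G.o (s x)) := by
      rw [← he]; exact diag_stab G hRrefl _ (pi_os G s hsec) (w k)
    have hd2 : (w k, w (k+1)) ∈ G.V.stab Set.univ (fun x => G.t (s x)) := by
      rw [← he]; exact diag_stab G hRrefl _ (pi_ts G s hsec) (w k)
    rcases Nat.lt_or_ge (k+1) m with hk1 | hk1
    · rcases hpairs (k+1) hk1 with h | h
      · exact h11 k hk1 ⟨hd1, h⟩
      · exact h22 k hk1 ⟨hd2, h⟩
    · obtain ⟨j, rfl⟩ : ∃ j, k = j + 1 := ⟨k - 1, by omega⟩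
      rcases hpairs j (by omega) with h | h
      · exact h11 j (by omega) ⟨h, hd1⟩
      · exact h22 j (by omega) ⟨h, hd2⟩
  push_neg at htriv
  have hOeq : ∀ {k}, k < m → (w k, w (k+1)) ∈ G.V.stab Set.univ (fun x => G.o (s x)) →
      Ov G s (w 0) (w k) = Ov G s (w 0) (w (k+1)) := fun {k} hk h =>
    (mem_stab_iff G hRsymm hRtrans _ (pi_os G s hsec) (hwk k (by omega))
      (hwk (k+1) (by omega))).mp h
  have hTeq : ∀ {k}, k < m → (w k, w (k+1)) ∈ G.V.stab Set.univ (fun x => G.t (s x)) →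
      Tv G s (w 0) (w k) = Tv G s (w 0) (w (k+1)) := fun {k} hk h =>
    (mem_stab_iff G hRsymm hRtrans _ (pi_ts G s hsec) (hwk k (by omega))
      (hwk (k+1) (by omega))).mp h
  have hR2 : ∀ k, k < m → ¬ (w k, w (k+1)) ∈ G.V.stab Set.univ (fun x => G.o (s x)) →
      (w k, w (k+1)) ∈ G.V.stab Set.univ (fun x => G.t (s x)) := by
    intro k hk h
    rcases hpairs k hk with h' | h'
    · exact absurd h' h
    · exact h'
  have halt : ∀ k, k + 1 < m →
      ((w k, w (k+1)) ∈ G.V.stab Set.univ (fun x => G.o (s x)) ↔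
        ¬ (w (k+1), w (k+2)) ∈ G.V.stab Set.univ (fun x => G.o (s x))) := by
    intro k hk
    constructor
    · intro h h'; exact h11 k hk ⟨h, h'⟩
    · intro h'
      by_contra h
      exact h22 k hk ⟨hR2 k (by omega) h, hR2 (k+1) hk h'⟩
  classical
  set d : ℕ → G.Edg.F := fun k =>
    if (w k, w (k+1)) ∈ G.V.stab Set.univ (fun x => G.o (s x)) then
      G.bar (ed G s (w 0) (w k)) else ed G s (w 0) (w k) with hd
  have hdpos : ∀ k, (w k, w (k+1)) ∈ G.V.stab Set.univ (fun x => G.o (s x)) →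
      d k = G.bar (ed G s (w 0) (w k)) := by
    intro k h; simp only [hd]; exact if_pos h
  have hdneg : ∀ k, ¬ (w k, w (k+1)) ∈ G.V.stab Set.univ (fun x => G.o (s x)) →
      d k = ed G s (w 0) (w k) := by
    intro k h; simp only [hd]; exact if_neg h
  have hdor : ∀ k, d k = ed G s (w 0) (w k) ∨ d k = G.bar (ed G s (w 0) (w k)) := by
    intro k
    by_cases h : (w k, w (k+1)) ∈ G.V.stab Set.univ (fun x => G.o (s x))
    · exact Or.inr (hdpos k h)
    · exact Or.inl (hdneg k h)
  have hπd : ∀ k, k ≤ m → G.Edg.π (d k) = w 0 := by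
    intro k hk
    rcases hdor k with h | h <;> rw [h]
    · exact pi_ed G s hsec (hwk k hk)
    · rw [G.bar_mor.2.1]; exact pi_ed G s hsec (hwk k hk)
  have hto : ∀ k, k + 2 ≤ m → G.t (d k) = G.o (d (k+1)) := by
    intro k hk2
    by_cases h : (w k, w (k+1)) ∈ G.V.stab Set.univ (fun x => G.o (s x))
    · have h' := (halt k (by omega)).mp h
      rw [hdpos k h, hdneg (k+1) h', t_bar, o_ed G s hsec (hwk k (by omega)),
        o_ed G s hsec (hwk (k+1) (by omega))]
      exact hOeq (by omega) h
    · have h' : (w (k+1), w (k+2)) ∈ G.V.stab Set.univ (fun x => G.o (s x)) := by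
        by_contra hh; exact h ((halt k (by omega)).mpr hh)
      rw [hdneg k h, hdpos (k+1) h', t_ed G s hsec (hwk k (by omega)), G.o_bar,
        t_ed G s hsec (hwk (k+1) (by omega))]
      exact hTeq (by omega) (hR2 k (by omega) h)
  obtain ⟨j, rfl⟩ : ∃ j, m = j + 1 := ⟨m - 1, by omega⟩
  by_cases hAB : ((w j, w (j+1)) ∈ G.V.stab Set.univ (fun x => G.o (s x)) ↔
      (w 0, w 1) ∈ G.V.stab Set.univ (fun x => G.o (s x)))
  · -- same wrap type
    have hj2 : 2 ≤ j := by
      rcases Nat.lt_or_ge j 2 with hj | hj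
      · exfalso
        have hj1 : j = 1 := by omega
        subst hj1
        rcases em ((w 0, w 1) ∈ G.V.stab Set.univ (fun x => G.o (s x))) with h0 | h0
        · exact (halt 0 (by omega)).mp h0 (hAB.mpr h0)
        · exact h0 ((halt 0 (by omega)).mpr (fun h1 => h0 (hAB.mp h1)))
      · exact hj
    by_cases hsub : w 1 = w j
    · rcases Nat.lt_or_ge j 3 with hj3 | hj3
      · have hj1 : j = 2 := by omega
        subst hj1
        exact htriv 1 (by omega) hsub
      · refine ih (j - 1) (by omega) (fun k => w (k+1)) ⟨by omega, ?_, ?_, ?_, ?_⟩ ?_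
        · intro k hk; exact hpairs (k+1) (by omega)
        · intro k hk; exact h11 (k+1) (by omega)
        · intro k hk; exact h22 (k+1) (by omega)
        · intro h1; exact absurd h1 (by omega)
        · show w (j - 1 + 1) = w (0 + 1)
          have hj1 : j - 1 + 1 = j := by omega
          rw [hj1]
          exact hsub.symm
    · refine (hArb (w 0)).2 ⟨j, fun k => d (k+1), by omega, ?_, ?_, ?_⟩
      · intro k hk; exact hπd (k+1) (by omega)
      · intro k hk
        show G.t (d (k+1)) = G.o (d ((k+1) % j + 1))
        rcases Nat.lt_or_ge (k+1) j with hkj | hkj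
        · rw [Nat.mod_eq_of_lt (by omega)]
          exact hto (k+1) (by omega)
        · have hkj' : k + 1 = j := by omega
          rw [hkj', Nat.mod_self]
          have h01 : (0 : ℕ) + 1 = 1 := rfl
          rw [h01]
          by_cases hj : (w j, w (j+1)) ∈ G.V.stab Set.univ (fun x => G.o (s x))
          · have h0 : (w 0, w 1) ∈ G.V.stab Set.univ (fun x => G.o (s x)) := hAB.mp hj
            have h1 : ¬ (w 1, w 2) ∈ G.V.stab Set.univ (fun x => G.o (s x)) :=
              (halt 0 (by omega)).mp h0
            rw [hdpos j hj, hdneg 1 h1, t_bar, o_ed G s hsec (hwk j (by omega)),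
              o_ed G s hsec (hwk 1 (by omega))]
            have e1 : Ov G s (w 0) (w j) = Ov G s (w 0) (w (j+1)) := hOeq (by omega) hj
            rw [e1, hcl]
            exact hOeq (by omega) h0
          · have h0 : ¬ (w 0, w 1) ∈ G.V.stab Set.univ (fun x => G.o (s x)) :=
              fun h => hj (hAB.mpr h)
            have h1 : (w 1, w 2) ∈ G.V.stab Set.univ (fun x => G.o (s x)) := by
              by_contra hh; exact h0 ((halt 0 (by omega)).mpr hh)
            rw [hdneg j hj, hdpos 1 h1, t_ed G s hsec (hwk j (by omega)), G.o_bar,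
              t_ed G s hsec (hwk 1 (by omega))]
            have e1 : Tv G s (w 0) (w j) = Tv G s (w 0) (w (j+1)) :=
              hTeq (by omega) (hR2 j (by omega) hj)
            rw [e1, hcl]
            exact hTeq (by omega) (hR2 0 (by omega) h0)
      · intro k hk
        show d ((k+1) % j + 1) ≠ G.bar (d (k+1))
        rcases Nat.lt_or_ge (k+1) j with hkj | hkj
        · rw [Nat.mod_eq_of_lt (by omega)]
          exact ndb G s P hP hinto hinj (hwk (k+1) (by omega)) (hwk (k+2) (by omega))
            (htriv (k+1) (by omega)) (hdor (k+1)) (hdor (k+2))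
        · have hkj' : k + 1 = j := by omega
          rw [hkj', Nat.mod_self]
          have h01 : (0 : ℕ) + 1 = 1 := rfl
          rw [h01]
          exact ndb G s P hP hinto hinj (hwk j (by omega)) (hwk 1 (by omega))
            (fun h => hsub h.symm) (hdor j) (hdor 1)
  · -- different wrap types
    set d' : G.Edg.F :=
      if (w j, w (j+1)) ∈ G.V.stab Set.univ (fun x => G.o (s x)) then
        ed G s (w 0) (w 0) else G.bar (ed G s (w 0) (w 0)) with hd'
    have hd'pos : (w j, w (j+1)) ∈ G.V.stab Set.univ (fun x => G.o (s x)) →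
        d' = ed G s (w 0) (w 0) := fun h => if_pos h
    have hd'neg : ¬ (w j, w (j+1)) ∈ G.V.stab Set.univ (fun x => G.o (s x)) →
        d' = G.bar (ed G s (w 0) (w 0)) := fun h => if_neg h
    have hd'or : d' = ed G s (w 0) (w 0) ∨ d' = G.bar (ed G s (w 0) (w 0)) := by
      by_cases h : (w j, w (j+1)) ∈ G.V.stab Set.univ (fun x => G.o (s x))
      · exact Or.inl (hd'pos h)
      · exact Or.inr (hd'neg h)
    have hπd' : G.Edg.π d' = w 0 := by
      rcases hd'or with h | h <;> rw [h]
      · exact pi_ed G s hsec (hRrefl (w 0))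
      · rw [G.bar_mor.2.1]; exact pi_ed G s hsec (hRrefl (w 0))
    refine (hArb (w 0)).2 ⟨j + 1, fun k => if k = j then d' else d (k+1),
      by omega, ?_, ?_, ?_⟩
    · intro k hk
      show G.Edg.π (if k = j then d' else d (k+1)) = w 0
      by_cases hkj : k = j
      · rw [if_pos hkj]; exact hπd'
      · rw [if_neg hkj]; exact hπd (k+1) (by omega)
    · intro k hk
      show G.t (if k = j then d' else d (k+1)) =
        G.o (if (k+1) % (j+1) = j then d' else d ((k+1) % (j+1) + 1))
      by_cases hkj : k = j
      · subst hkj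
        rw [Nat.mod_self, if_pos rfl, if_neg (by omega : ¬ (0 : ℕ) = k)]
        have h01 : (0 : ℕ) + 1 = 1 := rfl
        rw [h01]
        by_cases hj : (w k, w (k+1)) ∈ G.V.stab Set.univ (fun x => G.o (s x))
        · have h0 : ¬ (w 0, w 1) ∈ G.V.stab Set.univ (fun x => G.o (s x)) :=
            fun h => hAB ⟨fun _ => h, fun _ => hj⟩
          have h1 : (w 1, w 2) ∈ G.V.stab Set.univ (fun x => G.o (s x)) := by
            by_contra hh; exact h0 ((halt 0 (by omega)).mpr hh)
          rw [hd'pos hj, hdpos 1 h1, t_ed G s hsec (hRrefl (w 0)), G.o_bar,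
            t_ed G s hsec (hwk 1 (by omega))]
          exact hTeq (by omega) (hR2 0 (by omega) h0)
        · have h0 : (w 0, w 1) ∈ G.V.stab Set.univ (fun x => G.o (s x)) := by
            by_contra h0'
            exact hAB ⟨fun h => absurd h hj, fun h => absurd h h0'⟩
          have h1 : ¬ (w 1, w 2) ∈ G.V.stab Set.univ (fun x => G.o (s x)) :=
            (halt 0 (by omega)).mp h0
          rw [hd'neg hj, hdneg 1 h1, t_bar, o_ed G s hsec (hRrefl (w 0)),
            o_ed G s hsec (hwk 1 (by omega))]
          exact hOeq (by omega) h0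
      · rw [if_neg hkj]
        have hkj2 : k + 1 < j + 1 := by omega
        rw [Nat.mod_eq_of_lt hkj2]
        by_cases hkj1 : k + 1 = j
        · rw [if_pos hkj1, hkj1]
          by_cases hj : (w j, w (j+1)) ∈ G.V.stab Set.univ (fun x => G.o (s x))
          · rw [hdpos j hj, hd'pos hj, t_bar, o_ed G s hsec (hwk j (by omega)),
              o_ed G s hsec (hRrefl (w 0))]
            have e1 : Ov G s (w 0) (w j) = Ov G s (w 0) (w (j+1)) := hOeq (by omega) hj
            rw [e1, hcl]
          · rw [hdneg j hj, hd'neg hj, t_ed G s hsec (hwk j (by omega)), G.o_bar,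
              t_ed G s hsec (hRrefl (w 0))]
            have e1 : Tv G s (w 0) (w j) = Tv G s (w 0) (w (j+1)) :=
              hTeq (by omega) (hR2 j (by omega) hj)
            rw [e1, hcl]
        · rw [if_neg hkj1]
          exact hto (k+1) (by omega)
    · intro k hk
      show (if (k+1) % (j+1) = j then d' else d ((k+1) % (j+1) + 1)) ≠
        G.bar (if k = j then d' else d (k+1))
      by_cases hkj : k = j
      · subst hkj
        rw [Nat.mod_self, if_pos rfl, if_neg (by omega : ¬ (0 : ℕ) = k)]
        have h01 : (0 : ℕ) + 1 = 1 := rfl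
        rw [h01]
        exact ndb G s P hP hinto hinj (hRrefl (w 0)) (hwk 1 (by omega))
          (htriv 0 (by omega)) hd'or (hdor 1)
      · rw [if_neg hkj]
        have hkj2 : k + 1 < j + 1 := by omega
        rw [Nat.mod_eq_of_lt hkj2]
        by_cases hkj1 : k + 1 = j
        · rw [if_pos hkj1, hkj1]
          have hne : w j ≠ w 0 := by
            have h1 : w j ≠ w (j+1) := htriv j (by omega)
            intro h; exact h1 (h.trans hcl.symm)
          exact ndb G s P hP hinto hinj (hwk j (by omega)) (hRrefl (w 0))
            hne (hdor j) hd'or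
        · rw [if_neg hkj1]
          exact ndb G s P hP hinto hinj (hwk (k+1) (by omega)) (hwk (k+2) (by omega))
            (htriv (k+1) (by omega)) (hdor (k+1)) (hdor (k+2))

end FPAux

end FPAux
/-- If `R` acts on an `R`-arboretum whose oriented edge space is isomorphic to the canonical
left `R`-fibered space (with diagonal section `s`) and whose vertex space is partitioned by the
saturations of the origin and terminal sections, then `R` is the free product of the
stabilizers of the two vertex sections. -/
theorem freeProduct_of_canonical_oriented_edges
    {X : Type u} [MeasurableSpace X] [StandardBorelSpace X]
    {R : Set (X × X)} (hR : IsCBER R)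
    (G : RGraphField X R) (hArb : G.IsArboretum)
    (P : Set G.Edg.F) (hP : G.IsOrientation P)
    (s : X → G.Edg.F) (hs : G.Edg.IsPartialSection Set.univ s)
    -- `(x, y) ∈ R ↦ (x, y) · s y` is an isomorphism of the canonical left
    -- `R`-fibered space onto `A^{1+}`, sending the diagonal to `s` :
    (hinto : ∀ ⦃x y : X⦄, (x, y) ∈ R → G.Edg.act x y (s y) ∈ P)
    (hinj : ∀ ⦃x y x' y' : X⦄, (x, y) ∈ R → (x', y') ∈ R →
      G.Edg.act x y (s y) = G.Edg.act x' y' (s y') → (x, y) = (x', y'))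
    (hsurj : ∀ e ∈ P, ∃ p : X × X, p ∈ R ∧ e = G.Edg.act p.1 p.2 (s p.2))
    -- the saturations of `o (d (X))` and `t (d (X))` partition the vertex space :
    (hdisj : Disjoint (G.V.sat (Set.range fun x => G.o (s x)))
      (G.V.sat (Set.range fun x => G.t (s x))))
    (hcover : G.V.sat (Set.range fun x => G.o (s x)) ∪
      G.V.sat (Set.range fun x => G.t (s x)) = Set.univ) :
    IsFreeProduct2 R (G.V.stab Set.univ fun x => G.o (s x))
      (G.V.stab Set.univ fun x => G.t (s x)) := by
  have hsec : ∀ z, G.Edg.π (s z) = z := fun z => hs.2.2 z trivial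
  have hRrefl : ∀ x : X, (x, x) ∈ R := hR.2.1
  have hRsymm : ∀ ⦃a b : X⦄, (a, b) ∈ R → (b, a) ∈ R := hR.2.2.1
  have hRtrans : ∀ ⦃a b c : X⦄, (a, b) ∈ R → (b, c) ∈ R → (a, c) ∈ R := hR.2.2.2.1
  refine ⟨fun p hp => hRsymm hp.2.2.1, fun p hp => hRsymm hp.2.2.1, ?_, ?_⟩
  · intro p hp
    exact FPAux.gen_aux G s P hRsymm hRtrans hsec hP hsurj hdisj
      ((hArb p.1).1 _ _ (FPAux.pi_Ov G s hsec (hRrefl p.1)) (FPAux.pi_Ov G s hsec hp))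
      (hRrefl p.1) hp (Or.inl rfl) (Or.inl rfl)
  · intro m x hred
    exact FPAux.no_closed G s P hR hArb hP hsec hinto hinj hsurj hdisj m x hred
end

section
/- Let A be an R-arboretum over X with an orientation A^{1+}, and suppose there exists a partial section d : A → A^{1+}, defined on a Borel set A ⊆ X, whose image d(A) is a fundamental domain of the induced relation R_{A^{1+}}. Assume moreover that the R_{A⁰}-saturations of o(d(A)) and of t(d(A)) form a Borel partition of the vertex space A⁰. Then the restriction R|_A is the free product of its subrelations Stab_R(o∘d) and Stab_R(t∘d). -/
open Set

universe u

/-- If the oriented edge space of an `R`-arboretum admits a partial section `s` on `A` whose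
image is a fundamental domain of the induced relation, and the saturations of the origin and
terminal vertex sections partition the vertex space, then `R|_A` is the free product of the
stabilizers of the two vertex sections. -/
theorem freeProduct_restriction_of_edge_fundamental_domain
    {X : Type u} [MeasurableSpace X] [StandardBorelSpace X]
    {R : Set (X × X)} (hR : IsCBER R)
    (G : RGraphField X R) (hArb : G.IsArboretum)
    (P : Set G.Edg.F) (hP : G.IsOrientation P)
    (A : Set X) (s : X → G.Edg.F) (hs : G.Edg.IsPartialSection A s)
    (hsP : ∀ x ∈ A, s x ∈ P)
    -- `s(A)` is a fundamental domain of the induced relation on `A^{1+}` :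
    (hfd : ∀ e ∈ P, ∃! x, x ∈ A ∧ (s x, e) ∈ G.Edg.rel)
    -- the saturations of `o (d (A))` and `t (d (A))` partition the vertex space :
    (hdisj : Disjoint (G.V.sat ((fun x => G.o (s x)) '' A))
      (G.V.sat ((fun x => G.t (s x)) '' A)))
    (hcover : G.V.sat ((fun x => G.o (s x)) '' A) ∪
      G.V.sat ((fun x => G.t (s x)) '' A) = Set.univ) :
    IsFreeProduct2 (Restrict R A) (G.V.stab A fun x => G.o (s x))
      (G.V.stab A fun x => G.t (s x)) := by
  classical
  set R1 := G.V.stab A fun x => G.o (s x) with hR1def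
  set R2 := G.V.stab A fun x => G.t (s x) with hR2def
  have Rsymm : ∀ {a b : X}, (a, b) ∈ R → (b, a) ∈ R := fun h => hR.2.2.1 h
  have Rtrans : ∀ {a b c : X}, (a, b) ∈ R → (b, c) ∈ R → (a, c) ∈ R :=
    fun h h' => hR.2.2.2.1 h h'
  have πs : ∀ x ∈ A, G.Edg.π (s x) = x := hs.2.2
  have πos : ∀ x ∈ A, G.V.π (G.o (s x)) = x :=
    fun x hx => (G.o_mor.2.1 (s x)).trans (πs x hx)
  have πts : ∀ x ∈ A, G.V.π (G.t (s x)) = x :=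
    fun x hx => (G.t_mor.2.1 (s x)).trans (πs x hx)
  have t_bar : ∀ a, G.t (G.bar a) = G.o a := fun a => by
    rw [← G.o_bar (G.bar a), G.bar_bar]
  have bar_inj : ∀ {a b : G.Edg.F}, G.bar a = G.bar b → a = b := fun {a b} h => by
    rw [← G.bar_bar a, h, G.bar_bar]
  have barP : ∀ {a : G.Edg.F}, a ∉ P → G.bar a ∈ P := by
    intro a ha
    by_contra h
    exact ha ((hP.2.1 a).mpr h)
  have eP : ∀ {x0 z : X}, z ∈ A → (x0, z) ∈ R → G.Edg.act x0 z (s z) ∈ P :=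
    fun {x0 z} hz h => hP.2.2 (s z) h (πs z hz) (hsP z hz)
  have eπ : ∀ {x0 z : X}, z ∈ A → (x0, z) ∈ R → G.Edg.π (G.Edg.act x0 z (s z)) = x0 :=
    fun {x0 z} hz h => G.Edg.act_proj (s z) h (πs z hz)
  have srel : ∀ {x0 z : X}, z ∈ A → (x0, z) ∈ R →
      (s z, G.Edg.act x0 z (s z)) ∈ G.Edg.rel := by
    intro x0 z hz h
    constructor
    · rw [eπ hz h, πs z hz]; exact h
    · rw [eπ hz h, πs z hz]
  have einj : ∀ {x0 u v : X}, u ∈ A → v ∈ A → (x0, u) ∈ R → (x0, v) ∈ R →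
      G.Edg.act x0 u (s u) = G.Edg.act x0 v (s v) → u = v := by
    intro x0 u v hu hv h1 h2 he
    obtain ⟨z, hz, huniq⟩ := hfd _ (eP hu h1)
    exact (huniq u ⟨hu, srel hu h1⟩).trans (huniq v ⟨hv, by rw [he]; exact srel hv h2⟩).symm
  have oe : ∀ {x0 z : X}, z ∈ A → (x0, z) ∈ R →
      G.o (G.Edg.act x0 z (s z)) = G.V.act x0 z (G.o (s z)) :=
    fun {x0 z} hz h => G.o_mor.2.2 (s z) h (πs z hz)
  have te : ∀ {x0 z : X}, z ∈ A → (x0, z) ∈ R →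
      G.t (G.Edg.act x0 z (s z)) = G.V.act x0 z (G.t (s z)) :=
    fun {x0 z} hz h => G.t_mor.2.2 (s z) h (πs z hz)
  have memR1 : ∀ {u v : X}, (u, v) ∈ R1 ↔
      (u ∈ A ∧ v ∈ A ∧ (v, u) ∈ R ∧ G.V.act v u (G.o (s u)) = G.o (s v)) :=
    fun {u v} => Iff.rfl
  have memR2 : ∀ {u v : X}, (u, v) ∈ R2 ↔
      (u ∈ A ∧ v ∈ A ∧ (v, u) ∈ R ∧ G.V.act v u (G.t (s u)) = G.t (s v)) :=
    fun {u v} => Iff.rfl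
  have L2o : ∀ {x0 u v : X}, (u, v) ∈ R1 → (x0, u) ∈ R → (x0, v) ∈ R →
      G.o (G.Edg.act x0 u (s u)) = G.o (G.Edg.act x0 v (s v)) := by
    intro x0 u v h hu hv
    obtain ⟨hu', hv', hvu, hact⟩ := memR1.mp h
    rw [oe hu' hu, oe hv' hv, ← hact, G.V.act_comp (G.o (s u)) hv hvu (πos u hu')]
  have L2t : ∀ {x0 u v : X}, (u, v) ∈ R2 → (x0, u) ∈ R → (x0, v) ∈ R →
      G.t (G.Edg.act x0 u (s u)) = G.t (G.Edg.act x0 v (s v)) := by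
    intro x0 u v h hu hv
    obtain ⟨hu', hv', hvu, hact⟩ := memR2.mp h
    rw [te hu' hu, te hv' hv, ← hact, G.V.act_comp (G.t (s u)) hv hvu (πts u hu')]
  have L3o : ∀ {x0 u v : X}, u ∈ A → v ∈ A → (x0, u) ∈ R → (x0, v) ∈ R →
      G.o (G.Edg.act x0 u (s u)) = G.o (G.Edg.act x0 v (s v)) → (u, v) ∈ R1 := by
    intro x0 u v hu hv h1 h2 heq
    rw [oe hu h1, oe hv h2] at heq
    refine memR1.mpr ⟨hu, hv, Rtrans (Rsymm h2) h1, ?_⟩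
    calc G.V.act v u (G.o (s u))
        = G.V.act v x0 (G.V.act x0 u (G.o (s u))) :=
          (G.V.act_comp _ (Rsymm h2) h1 (πos u hu)).symm
      _ = G.V.act v x0 (G.V.act x0 v (G.o (s v))) := by rw [heq]
      _ = G.V.act v v (G.o (s v)) := G.V.act_comp _ (Rsymm h2) h2 (πos v hv)
      _ = G.o (s v) := G.V.act_id v _ (πos v hv)
  have L3t : ∀ {x0 u v : X}, u ∈ A → v ∈ A → (x0, u) ∈ R → (x0, v) ∈ R →
      G.t (G.Edg.act x0 u (s u)) = G.t (G.Edg.act x0 v (s v)) → (u, v) ∈ R2 := by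
    intro x0 u v hu hv h1 h2 heq
    rw [te hu h1, te hv h2] at heq
    refine memR2.mpr ⟨hu, hv, Rtrans (Rsymm h2) h1, ?_⟩
    calc G.V.act v u (G.t (s u))
        = G.V.act v x0 (G.V.act x0 u (G.t (s u))) :=
          (G.V.act_comp _ (Rsymm h2) h1 (πts u hu)).symm
      _ = G.V.act v x0 (G.V.act x0 v (G.t (s v))) := by rw [heq]
      _ = G.V.act v v (G.t (s v)) := G.V.act_comp _ (Rsymm h2) h2 (πts v hv)
      _ = G.t (s v) := G.V.act_id v _ (πts v hv)
  have R1diag : ∀ {z : X}, z ∈ A → (z, z) ∈ R1 :=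
    fun {z} hz => memR1.mpr ⟨hz, hz, hR.2.1 z, G.V.act_id z _ (πos z hz)⟩
  have R2diag : ∀ {z : X}, z ∈ A → (z, z) ∈ R2 :=
    fun {z} hz => memR2.mpr ⟨hz, hz, hR.2.1 z, G.V.act_id z _ (πts z hz)⟩
  have R1trans : ∀ {a b c : X}, (a, b) ∈ R1 → (b, c) ∈ R1 → (a, c) ∈ R1 := by
    intro a b c h h'
    obtain ⟨ha, hb, hba, h1⟩ := memR1.mp h
    obtain ⟨-, hc, hcb, h2⟩ := memR1.mp h'
    refine memR1.mpr ⟨ha, hc, Rtrans hcb hba, ?_⟩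
    rw [← h2, ← h1, G.V.act_comp _ hcb hba (πos a ha)]
  have R2trans : ∀ {a b c : X}, (a, b) ∈ R2 → (b, c) ∈ R2 → (a, c) ∈ R2 := by
    intro a b c h h'
    obtain ⟨ha, hb, hba, h1⟩ := memR2.mp h
    obtain ⟨-, hc, hcb, h2⟩ := memR2.mp h'
    refine memR2.mpr ⟨ha, hc, Rtrans hcb hba, ?_⟩
    rw [← h2, ← h1, G.V.act_comp _ hcb hba (πts a ha)]
  have no_bigon : ∀ {f f' : G.Edg.F}, f ≠ f' → G.Edg.π f' = G.Edg.π f →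
      G.o f = G.o f' → G.t f = G.t f' → False := by
    intro f f' hne hπ ho ht
    apply (hArb (G.Edg.π f)).2
    refine ⟨2, fun k => if k = 0 then f else G.bar f', by omega, ?_, ?_, ?_⟩
    · intro k hk
      interval_cases k
      · simp
      · simp only [if_neg (by omega : (1:ℕ) ≠ 0)]
        rw [G.bar_mor.2.1]; exact hπ
    · intro k hk
      interval_cases k
      · norm_num
        rw [G.o_bar]; exact ht
      · norm_num
        rw [t_bar]; exact ho.symm
    · intro k hk
      interval_cases k
      · norm_num
        intro h; exact hne (bar_inj h).symm
      · norm_num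
        rw [G.bar_bar]; exact fun h => hne h
  have satO : ∀ {f : G.Edg.F}, f ∈ P → G.o f ∈ G.V.sat ((fun x => G.o (s x)) '' A) := by
    intro f hf
    obtain ⟨z, ⟨hz, hzR, hzact⟩, -⟩ := hfd f hf
    rw [πs z hz] at hzR hzact
    refine ⟨G.o (s z), ⟨z, hz, rfl⟩, ?_, ?_⟩
    · rw [G.o_mor.2.1 f, πos z hz]; exact hzR
    · rw [G.o_mor.2.1 f, πos z hz, ← oe hz hzR, hzact]
  have satT : ∀ {f : G.Edg.F}, f ∈ P → G.t f ∈ G.V.sat ((fun x => G.t (s x)) '' A) := by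
    intro f hf
    obtain ⟨z, ⟨hz, hzR, hzact⟩, -⟩ := hfd f hf
    rw [πs z hz] at hzR hzact
    refine ⟨G.t (s z), ⟨z, hz, rfl⟩, ?_, ?_⟩
    · rw [G.t_mor.2.1 f, πts z hz]; exact hzR
    · rw [G.t_mor.2.1 f, πts z hz, ← te hz hzR, hzact]
  have noMixed : ∀ {f f' : G.Edg.F}, f ∈ P → f' ∈ P → G.o f ≠ G.t f' := by
    intro f f' hf hf' h
    exact Set.disjoint_left.mp hdisj (satO hf) (by rw [h]; exact satT hf')
  have incStep : ∀ {x0 z z' : X} {v : G.V.F}, z ∈ A → z' ∈ A → (x0, z) ∈ R → (x0, z') ∈ R →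
      (G.o (G.Edg.act x0 z (s z)) = v ∨ G.t (G.Edg.act x0 z (s z)) = v) →
      (G.o (G.Edg.act x0 z' (s z')) = v ∨ G.t (G.Edg.act x0 z' (s z')) = v) →
      (z, z') ∈ R1 ∨ (z, z') ∈ R2 := by
    intro x0 z z' v hz hz' h1 h2 hv hv'
    rcases hv with h | h <;> rcases hv' with h' | h'
    · exact Or.inl (L3o hz hz' h1 h2 (h.trans h'.symm))
    · exact absurd (h.trans h'.symm) (noMixed (eP hz h1) (eP hz' h2))
    · exact absurd (h'.trans h.symm) (noMixed (eP hz' h2) (eP hz h1))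
    · exact Or.inr (L3t hz hz' h1 h2 (h.trans h'.symm))
  refine ⟨?_, ?_, ?_, ?_⟩
  · rintro ⟨u, v⟩ ⟨hu, hv, hvu, -⟩
    exact ⟨Rsymm hvu, hu, hv⟩
  · rintro ⟨u, v⟩ ⟨hu, hv, hvu, -⟩
    exact ⟨Rsymm hvu, hu, hv⟩
  · -- generation
    have walk : ∀ {x0 : X} {v w : G.V.F}, Relation.ReflTransGen (G.Adj x0) v w →
        ∀ {z z' : X}, z ∈ A → z' ∈ A → (x0, z) ∈ R → (x0, z') ∈ R →
        (G.o (G.Edg.act x0 z (s z)) = v ∨ G.t (G.Edg.act x0 z (s z)) = v) →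
        (G.o (G.Edg.act x0 z' (s z')) = w ∨ G.t (G.Edg.act x0 z' (s z')) = w) →
        Relation.EqvGen (fun a b => (a, b) ∈ R1 ∨ (a, b) ∈ R2) z z' := by
      intro x0 v w h
      induction h with
      | refl =>
        intro z z' hz hz' h1 h2 hv hw
        exact Relation.EqvGen.rel _ _ (incStep hz hz' h1 h2 hv hw)
      | tail hsteps hadj ih =>
        intro z z' hz hz' h1 h2 hv hw
        obtain ⟨ed, hπed, hoed, hted⟩ := hadj
        by_cases hedP : ed ∈ P
        · obtain ⟨z0, ⟨hz0, hz0R, hz0act⟩, -⟩ := hfd ed hedP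
          rw [πs z0 hz0] at hz0R hz0act
          rw [hπed] at hz0R hz0act
          have e1 := ih hz hz0 h1 hz0R hv (Or.inl (by rw [hz0act]; exact hoed))
          have e2 := Relation.EqvGen.rel (r := fun a b => (a, b) ∈ R1 ∨ (a, b) ∈ R2) _ _
            (incStep hz0 hz' hz0R h2 (Or.inr (by rw [hz0act]; exact hted)) hw)
          exact Relation.EqvGen.trans _ _ _ e1 e2
        · have hbP := barP hedP
          obtain ⟨z0, ⟨hz0, hz0R, hz0act⟩, -⟩ := hfd (G.bar ed) hbP
          rw [πs z0 hz0, G.bar_mor.2.1, hπed] at hz0R hz0act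
          have e1 := ih hz hz0 h1 hz0R hv
            (Or.inr (by rw [hz0act, t_bar]; exact hoed))
          have e2 := Relation.EqvGen.rel (r := fun a b => (a, b) ∈ R1 ∨ (a, b) ∈ R2) _ _
            (incStep hz0 hz' hz0R h2
              (Or.inl (by rw [hz0act, G.o_bar]; exact hted)) hw)
          exact Relation.EqvGen.trans _ _ _ e1 e2
    rintro ⟨u, v⟩ ⟨hRuv, hu, hv⟩
    have conn := (hArb u).1 (G.o (s u)) (G.o (G.Edg.act u v (s v))) (πos u hu)
      ((G.o_mor.2.1 _).trans (eπ hv hRuv))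
    have hsu : G.Edg.act u u (s u) = s u := G.Edg.act_id u (s u) (πs u hu)
    exact walk conn hu hv (hR.2.1 u) hRuv (Or.inl (by rw [hsu])) (Or.inl rfl)
  · -- freeness
    have key : ∀ m : ℕ, ∀ x : ℕ → X, Reduced2 R1 R2 m x → x m = x 0 → False := by
      intro m
      induction m using Nat.strong_induction_on with
      | _ m IH =>
      intro x hred hclose
      obtain ⟨hm1, hpairs, h3, h4, hone⟩ := hred
      rcases eq_or_lt_of_le hm1 with hm | hm2
      · rw [← hm] at hclose
        exact hone hm.symm hclose.symm
      · have hm11 : m - 1 + 1 = m := by omega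
        have xcongr : ∀ {S : Set (X × X)} {i j i' j' : ℕ}, i = i' → j = j' →
            (x i', x j') ∈ S → (x i, x j) ∈ S := by
          intro S i j i' j' hi hj h; rw [hi, hj]; exact h
        have hA : ∀ k, k ≤ m → x k ∈ A := by
          intro k hk
          rcases lt_or_eq_of_le hk with hk | hk
          · rcases hpairs k hk with h | h
            · exact (memR1.mp h).1
            · exact (memR2.mp h).1
          · subst hk
            rcases hpairs (k-1) (by omega) with h | h
            · have := (memR1.mp h).2.1
              rwa [show k - 1 + 1 = k from by omega] at this
            · have := (memR2.mp h).2.1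
              rwa [show k - 1 + 1 = k from by omega] at this
        have h0R : ∀ k, k ≤ m → (x 0, x k) ∈ R := by
          intro k
          induction k with
          | zero => intro _; exact hR.2.1 (x 0)
          | succ n ihn =>
            intro hk
            have hn := ihn (by omega)
            have hxy : (x n, x (n+1)) ∈ R := by
              rcases hpairs n (by omega) with h | h
              · exact Rsymm (memR1.mp h).2.2.1
              · exact Rsymm (memR2.mp h).2.2.1
            exact Rtrans hn hxy
        have distinct : ∀ k, k < m → x k ≠ x (k+1) := by
          intro k hk heq
          have hxk : x k ∈ A := hA k (by omega)
          have hd1 : (x k, x (k+1)) ∈ R1 := by rw [← heq]; exact R1diag hxk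
          have hd2 : (x k, x (k+1)) ∈ R2 := by rw [← heq]; exact R2diag hxk
          rcases Nat.eq_zero_or_pos k with hk0 | hk0
          · subst hk0
            rcases hpairs 1 (by omega) with h | h
            · exact h3 0 (by omega) ⟨hd1, h⟩
            · exact h4 0 (by omega) ⟨hd2, h⟩
          · rcases hpairs (k-1) (by omega) with h | h
            · exact h3 (k-1) (by omega) ⟨h, xcongr (by omega) (by omega) hd1⟩
            · exact h4 (k-1) (by omega) ⟨h, xcongr (by omega) (by omega) hd2⟩
        set e : ℕ → G.Edg.F := fun k => G.Edg.act (x 0) (x k) (s (x k)) with he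
        have hem : e m = e 0 := by simp only [he, hclose]
        have eπ' : ∀ k, k ≤ m → G.Edg.π (e k) = x 0 := fun k hk => eπ (hA k hk) (h0R k hk)
        have einj' : ∀ k l, k ≤ m → l ≤ m → e k = e l → x k = x l :=
          fun k l hk hl h => einj (hA k hk) (hA l hl) (h0R k hk) (h0R l hl) h
        have ediff : ∀ k, k < m → e k ≠ e (k+1) :=
          fun k hk h => distinct k hk (einj' k (k+1) (by omega) (by omega) h)
        have oEq : ∀ {k l : ℕ}, k ≤ m → l ≤ m → (x k, x l) ∈ R1 → G.o (e k) = G.o (e l) :=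
          fun {k l} hk hl h => L2o h (h0R k hk) (h0R l hl)
        have tEq : ∀ {k l : ℕ}, k ≤ m → l ≤ m → (x k, x l) ∈ R2 → G.t (e k) = G.t (e l) :=
          fun {k l} hk hl h => L2t h (h0R k hk) (h0R l hl)
        have bigon : ∀ {k l : ℕ}, k ≤ m → l ≤ m → x k ≠ x l →
            (x k, x l) ∈ R1 → (x k, x l) ∈ R2 → False := by
          intro k l hk hl hne h1 h2
          exact no_bigon (fun h => hne (einj' k l hk hl h))
            ((eπ' l hl).trans (eπ' k hk).symm) (oEq hk hl h1) (tEq hk hl h2)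
        have hpm : (x (m-1), x m) ∈ R1 ∨ (x (m-1), x m) ∈ R2 := by
          rcases hpairs (m-1) (by omega) with h | h
          · exact Or.inl (xcongr rfl (by omega) h)
          · exact Or.inr (xcongr rfl (by omega) h)
        have circuit : ((x (m-1), x m) ∈ R1 ∧ (x 0, x 1) ∉ R1) ∨
            ((x (m-1), x m) ∉ R1 ∧ (x 0, x 1) ∈ R1) → False := by
          intro hwrap
          set c : ℕ → G.Edg.F := fun k => if (x k, x (k+1)) ∈ R1 then G.bar (e k) else e k
            with hc
          have hcpos : ∀ k, (x k, x (k+1)) ∈ R1 → c k = G.bar (e k) := by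
            intro k h; simp only [hc]; rw [if_pos h]
          have hcneg : ∀ k, (x k, x (k+1)) ∉ R1 → c k = e k := by
            intro k h; simp only [hc]; rw [if_neg h]
          apply (hArb (x 0)).2
          refine ⟨m, c, by omega, ?_, ?_, ?_⟩
          · intro k hk
            by_cases h : (x k, x (k+1)) ∈ R1
            · rw [hcpos k h, G.bar_mor.2.1]; exact eπ' k (by omega)
            · rw [hcneg k h]; exact eπ' k (by omega)
          · intro k hk
            rcases lt_or_eq_of_le (Nat.succ_le_of_lt hk) with hk1 | hk1
            · rw [Nat.mod_eq_of_lt hk1]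
              by_cases h1 : (x k, x (k+1)) ∈ R1
              · have h2 : (x (k+1), x (k+1+1)) ∉ R1 :=
                  fun h => h3 k hk1 ⟨h1, xcongr rfl (by omega) h⟩
                rw [hcpos k h1, hcneg (k+1) h2, t_bar]
                exact oEq (by omega) (by omega) h1
              · have h1' : (x k, x (k+1)) ∈ R2 := (hpairs k hk).resolve_left h1
                have h2 : (x (k+1), x (k+1+1)) ∈ R1 := by
                  rcases hpairs (k+1) hk1 with h | h
                  · exact h
                  · exact absurd ⟨h1', xcongr rfl (by omega) h⟩ (h4 k hk1)
                rw [hcneg k h1, hcpos (k+1) h2, G.o_bar]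
                exact tEq (by omega) (by omega) h1'
            · have hkm : k = m - 1 := by omega
              subst hkm
              rw [show m-1+1 = m from by omega, Nat.mod_self]
              rcases hwrap with ⟨hw1, hw2⟩ | ⟨hw1, hw2⟩
              · rw [hcpos (m-1) (xcongr rfl hm11 hw1), hcneg 0 hw2, t_bar]
                have h := oEq (k := m-1) (l := m) (by omega) le_rfl hw1
                rw [hem] at h
                exact h
              · have hw1' : (x (m-1), x m) ∈ R2 := hpm.resolve_left hw1
                rw [hcneg (m-1) (fun h => hw1 (xcongr rfl hm11.symm h)), hcpos 0 hw2,
                  G.o_bar]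
                have h := tEq (k := m-1) (l := m) (by omega) le_rfl hw1'
                rw [hem] at h
                exact h
          · intro k hk
            rcases lt_or_eq_of_le (Nat.succ_le_of_lt hk) with hk1 | hk1
            · rw [Nat.mod_eq_of_lt hk1]
              by_cases h1 : (x k, x (k+1)) ∈ R1
              · have h2 : (x (k+1), x (k+1+1)) ∉ R1 :=
                  fun h => h3 k hk1 ⟨h1, xcongr rfl (by omega) h⟩
                rw [hcneg (k+1) h2, hcpos k h1, G.bar_bar]
                exact fun h => ediff k (by omega) h.symm
              · have h1' : (x k, x (k+1)) ∈ R2 := (hpairs k hk).resolve_left h1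
                have h2 : (x (k+1), x (k+1+1)) ∈ R1 := by
                  rcases hpairs (k+1) hk1 with h | h
                  · exact h
                  · exact absurd ⟨h1', xcongr rfl (by omega) h⟩ (h4 k hk1)
                rw [hcneg k h1, hcpos (k+1) h2]
                exact fun h => ediff k (by omega) (bar_inj h).symm
            · have hkm : k = m - 1 := by omega
              subst hkm
              rw [show m-1+1 = m from by omega, Nat.mod_self]
              have hdm : e (m-1) ≠ e 0 := by
                have h := ediff (m-1) (by omega)
                rw [hm11, hem] at h
                exact h
              rcases hwrap with ⟨hw1, hw2⟩ | ⟨hw1, hw2⟩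
              · rw [hcneg 0 hw2, hcpos (m-1) (xcongr rfl hm11 hw1), G.bar_bar]
                exact fun h => hdm h.symm
              · rw [hcpos 0 hw2, hcneg (m-1) (fun h => hw1 (xcongr rfl hm11.symm h))]
                exact fun h => hdm (bar_inj h).symm
        have surgery1 : (x (m-1), x m) ∈ R1 → (x 0, x 1) ∈ R1 → False := by
          intro hL hF
          have hm3 : 3 ≤ m := by
            by_contra hcon
            have hm2' : m = 2 := by omega
            exact h3 0 (by omega) ⟨hF, xcongr (by omega) (by omega) hL⟩
          have hL0 : (x (m-1), x 0) ∈ R1 := by rw [← hclose]; exact hL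
          have hnew : (x (m-1), x 1) ∈ R1 := R1trans hL0 hF
          by_cases hnew2 : (x (m-1), x 1) ∈ R2
          · by_cases heq : x (m-1) = x 1
            · refine IH (m-2) (by omega) (fun k => x (k+1)) ⟨by omega, ?_, ?_, ?_, ?_⟩ ?_
              · intro k hk; exact hpairs (k+1) (by omega)
              · intro k hk hpair
                exact h3 (k+1) (by omega) ⟨hpair.1, xcongr rfl (by omega) hpair.2⟩
              · intro k hk hpair
                exact h4 (k+1) (by omega) ⟨hpair.1, xcongr rfl (by omega) hpair.2⟩
              · intro hm'; exact distinct 1 (by omega)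
              · show x (m-2+1) = x (0+1)
                rw [show m-2+1 = m-1 from by omega]
                exact heq
            · exact bigon (by omega) (by omega) heq hnew hnew2
          · have hpm2 : (x (m-2), x (m-2+1)) ∉ R1 := by
              intro h
              exact h3 (m-2) (by omega) ⟨h, xcongr (by omega) (by omega) hL⟩
            set y : ℕ → X := fun k => if k < m-1 then x (k+1) else x 1 with hy
            have hy1 : ∀ k, k < m-1 → y k = x (k+1) := by
              intro k hk; simp only [hy]; rw [if_pos hk]
            have hy2 : y (m-1) = x 1 := by
              simp only [hy]; rw [if_neg (lt_irrefl _)]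
            refine IH (m-1) (by omega) y ⟨by omega, ?_, ?_, ?_, ?_⟩ ?_
            · intro k hk
              rcases lt_or_eq_of_le (Nat.succ_le_of_lt hk) with hk1 | hk1
              · rw [hy1 k (by omega), hy1 (k+1) hk1]
                exact hpairs (k+1) (by omega)
              · have hk1' : k + 1 = m - 1 := by omega
                rw [hk1', hy2, hy1 k (by omega)]
                exact Or.inl (xcongr hk1' rfl hnew)
            · intro k hk hpair
              obtain ⟨ha, hb⟩ := hpair
              rcases lt_or_eq_of_le (Nat.succ_le_of_lt hk) with hk1 | hk1
              · rw [hy1 k (by omega), hy1 (k+1) (by omega)] at ha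
                rw [hy1 (k+1) (by omega), hy1 (k+2) (by omega)] at hb
                exact h3 (k+1) (by omega) ⟨ha, xcongr rfl (by omega) hb⟩
              · rw [hy1 k (by omega), hy1 (k+1) (by omega)] at ha
                exact hpm2 (xcongr (by omega) (by omega) ha)
            · intro k hk hpair
              obtain ⟨ha, hb⟩ := hpair
              rcases lt_or_eq_of_le (Nat.succ_le_of_lt hk) with hk1 | hk1
              · rw [hy1 k (by omega), hy1 (k+1) (by omega)] at ha
                rw [hy1 (k+1) (by omega), hy1 (k+2) (by omega)] at hb
                exact h4 (k+1) (by omega) ⟨ha, xcongr rfl (by omega) hb⟩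
              · rw [hy1 (k+1) (by omega)] at hb
                rw [show k+2 = m-1 from by omega, hy2] at hb
                exact hnew2 (xcongr (by omega) rfl hb)
            · intro hm'; exact absurd hm' (by omega)
            · rw [hy2, hy1 0 (by omega)]
        have surgery2 : (x (m-1), x m) ∈ R2 → (x 0, x 1) ∈ R2 → False := by
          intro hL hF
          have hm3 : 3 ≤ m := by
            by_contra hcon
            have hm2' : m = 2 := by omega
            exact h4 0 (by omega) ⟨hF, xcongr (by omega) (by omega) hL⟩
          have hL0 : (x (m-1), x 0) ∈ R2 := by rw [← hclose]; exact hL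
          have hnew : (x (m-1), x 1) ∈ R2 := R2trans hL0 hF
          by_cases hnew1 : (x (m-1), x 1) ∈ R1
          · by_cases heq : x (m-1) = x 1
            · refine IH (m-2) (by omega) (fun k => x (k+1)) ⟨by omega, ?_, ?_, ?_, ?_⟩ ?_
              · intro k hk; exact hpairs (k+1) (by omega)
              · intro k hk hpair
                exact h3 (k+1) (by omega) ⟨hpair.1, xcongr rfl (by omega) hpair.2⟩
              · intro k hk hpair
                exact h4 (k+1) (by omega) ⟨hpair.1, xcongr rfl (by omega) hpair.2⟩
              · intro hm'; exact distinct 1 (by omega)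
              · show x (m-2+1) = x (0+1)
                rw [show m-2+1 = m-1 from by omega]
                exact heq
            · exact bigon (by omega) (by omega) heq hnew1 hnew
          · have hpm2 : (x (m-2), x (m-2+1)) ∉ R2 := by
              intro h
              exact h4 (m-2) (by omega) ⟨h, xcongr (by omega) (by omega) hL⟩
            set y : ℕ → X := fun k => if k < m-1 then x (k+1) else x 1 with hy
            have hy1 : ∀ k, k < m-1 → y k = x (k+1) := by
              intro k hk; simp only [hy]; rw [if_pos hk]
            have hy2 : y (m-1) = x 1 := by
              simp only [hy]; rw [if_neg (lt_irrefl _)]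
            refine IH (m-1) (by omega) y ⟨by omega, ?_, ?_, ?_, ?_⟩ ?_
            · intro k hk
              rcases lt_or_eq_of_le (Nat.succ_le_of_lt hk) with hk1 | hk1
              · rw [hy1 k (by omega), hy1 (k+1) hk1]
                exact hpairs (k+1) (by omega)
              · have hk1' : k + 1 = m - 1 := by omega
                rw [hk1', hy2, hy1 k (by omega)]
                exact Or.inr (xcongr hk1' rfl hnew)
            · intro k hk hpair
              obtain ⟨ha, hb⟩ := hpair
              rcases lt_or_eq_of_le (Nat.succ_le_of_lt hk) with hk1 | hk1
              · rw [hy1 k (by omega), hy1 (k+1) (by omega)] at ha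
                rw [hy1 (k+1) (by omega), hy1 (k+2) (by omega)] at hb
                exact h3 (k+1) (by omega) ⟨ha, xcongr rfl (by omega) hb⟩
              · rw [hy1 (k+1) (by omega)] at hb
                rw [show k+2 = m-1 from by omega, hy2] at hb
                exact hnew1 (xcongr (by omega) rfl hb)
            · intro k hk hpair
              obtain ⟨ha, hb⟩ := hpair
              rcases lt_or_eq_of_le (Nat.succ_le_of_lt hk) with hk1 | hk1
              · rw [hy1 k (by omega), hy1 (k+1) (by omega)] at ha
                rw [hy1 (k+1) (by omega), hy1 (k+2) (by omega)] at hb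
                exact h4 (k+1) (by omega) ⟨ha, xcongr rfl (by omega) hb⟩
              · rw [hy1 k (by omega), hy1 (k+1) (by omega)] at ha
                exact hpm2 (xcongr (by omega) (by omega) ha)
            · intro hm'; exact absurd hm' (by omega)
            · rw [hy2, hy1 0 (by omega)]
        by_cases hL : (x (m-1), x m) ∈ R1 <;> by_cases hF : (x 0, x 1) ∈ R1
        · exact surgery1 hL hF
        · exact circuit (Or.inl ⟨hL, hF⟩)
        · exact circuit (Or.inr ⟨hL, hF⟩)
        · exact surgery2 (hpm.resolve_left hL) ((hpairs 0 (by omega)).resolve_left hF)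
    exact fun m x hred hclose => key m x hred hclose
end

section
/- Let R be a countable Borel equivalence relation on X and A an R-field of Borel graphs over X with an orientation A^{1+} admitting a saturating Borel section s : X → A^{1+} defined on all of X, and such that the R_{A⁰}-saturations of o(s(X)) and of t(s(X)) form an R-invariant Borel partition of the vertex space A⁰ into two pieces. Then every fiber A_x is connected if and only if R is the smallest equivalence relation containing Stab_R(o∘s) and Stab_R(t∘s). -/
open Set

universe u

/-- Connectivity of the fibers is equivalent to generation by the two vertex stabilizers. -/
theorem fiberConnected_iff_generated_by_stabilizers
    {X : Type u} [MeasurableSpace X] [StandardBorelSpace X]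
    {R : Set (X × X)} (hR : IsCBER R)
    (G : RGraphField X R)
    (P : Set G.Edg.F) (hP : G.IsOrientation P)
    (s : X → G.Edg.F) (hs : G.Edg.IsPartialSection Set.univ s)
    (hsP : ∀ x, s x ∈ P)
    -- `s` is a saturating Borel section of `A^{1+}` :
    (hsat : ∀ e ∈ P, ∃ x : X, (s x, e) ∈ G.Edg.rel)
    -- the saturations of `o (s (X))` and `t (s (X))` partition the vertex space in two :
    (hdisj : Disjoint (G.V.sat (Set.range fun x => G.o (s x)))
      (G.V.sat (Set.range fun x => G.t (s x))))
    (hcover : G.V.sat (Set.range fun x => G.o (s x)) ∪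
      G.V.sat (Set.range fun x => G.t (s x)) = Set.univ) :
    (∀ x : X, G.FiberConnected x) ↔
      ∀ x y : X, (x, y) ∈ R ↔
        Relation.EqvGen (fun a b =>
          (a, b) ∈ G.V.stab Set.univ (fun z => G.o (s z)) ∨
          (a, b) ∈ G.V.stab Set.univ (fun z => G.t (s z))) x y := by
  classical
  obtain ⟨hRmeas, hrefl, hsymm, htrans, hcount⟩ := hR
  have hπs : ∀ x, G.Edg.π (s x) = x := fun x => hs.2.2 x trivial
  have hπo : ∀ e, G.V.π (G.o e) = G.Edg.π e := fun e => G.o_mor.2.1 e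
  have hπt : ∀ e, G.V.π (G.t e) = G.Edg.π e := fun e => G.t_mor.2.1 e
  have hπbar : ∀ e, G.Edg.π (G.bar e) = G.Edg.π e := fun e => G.bar_mor.2.1 e
  have ht_bar : ∀ e, G.t (G.bar e) = G.o e := fun e => by
    rw [← G.o_bar (G.bar e), G.bar_bar]
  have hπos : ∀ z, G.V.π (G.o (s z)) = z := fun z => by rw [hπo, hπs]
  have hπts : ∀ z, G.V.π (G.t (s z)) = z := fun z => by rw [hπt, hπs]
  have hπO : ∀ {x z}, (x, z) ∈ R → G.V.π (G.V.act x z (G.o (s z))) = x :=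
    fun {x z} h => G.V.act_proj _ h (hπos z)
  have hπT : ∀ {x z}, (x, z) ∈ R → G.V.π (G.V.act x z (G.t (s z))) = x :=
    fun {x z} h => G.V.act_proj _ h (hπts z)
  have hOsat : ∀ {x z}, (x, z) ∈ R →
      G.V.act x z (G.o (s z)) ∈ G.V.sat (Set.range fun x => G.o (s x)) := by
    intro x z h
    refine ⟨G.o (s z), ⟨z, rfl⟩, ?_, ?_⟩
    · rw [hπO h, hπos]; exact h
    · rw [hπO h, hπos]
  have hTsat : ∀ {x z}, (x, z) ∈ R →
      G.V.act x z (G.t (s z)) ∈ G.V.sat (Set.range fun x => G.t (s x)) := by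
    intro x z h
    refine ⟨G.t (s z), ⟨z, rfl⟩, ?_, ?_⟩
    · rw [hπT h, hπts]; exact h
    · rw [hπT h, hπts]
  have hOT : ∀ {x z z'}, (x, z) ∈ R → (x, z') ∈ R →
      G.V.act x z (G.o (s z)) ≠ G.V.act x z' (G.t (s z')) := by
    intro x z z' hz hz' heq
    exact Set.disjoint_left.mp hdisj (hOsat hz) (heq ▸ hTsat hz')
  have hstabO : ∀ {x z z'}, (x, z) ∈ R → (x, z') ∈ R →
      G.V.act x z (G.o (s z)) = G.V.act x z' (G.o (s z')) →
      (z, z') ∈ G.V.stab Set.univ (fun w => G.o (s w)) := by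
    intro x z z' hz hz' heq
    have e1 : G.V.act z' x (G.V.act x z (G.o (s z))) = G.V.act z' z (G.o (s z)) :=
      G.V.act_comp _ (hsymm hz') hz (hπos z)
    have e2 : G.V.act z' x (G.V.act x z' (G.o (s z'))) = G.o (s z') := by
      rw [G.V.act_comp _ (hsymm hz') hz' (hπos z'), G.V.act_id _ _ (hπos z')]
    exact ⟨trivial, trivial, htrans (hsymm hz') hz, by rw [← e1, heq, e2]⟩
  have hstabT : ∀ {x z z'}, (x, z) ∈ R → (x, z') ∈ R →
      G.V.act x z (G.t (s z)) = G.V.act x z' (G.t (s z')) →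
      (z, z') ∈ G.V.stab Set.univ (fun w => G.t (s w)) := by
    intro x z z' hz hz' heq
    have e1 : G.V.act z' x (G.V.act x z (G.t (s z))) = G.V.act z' z (G.t (s z)) :=
      G.V.act_comp _ (hsymm hz') hz (hπts z)
    have e2 : G.V.act z' x (G.V.act x z' (G.t (s z'))) = G.t (s z') := by
      rw [G.V.act_comp _ (hsymm hz') hz' (hπts z'), G.V.act_id _ _ (hπts z')]
    exact ⟨trivial, trivial, htrans (hsymm hz') hz, by rw [← e1, heq, e2]⟩
  have hOeq : ∀ {x z z'}, (x, z') ∈ R →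
      (z, z') ∈ G.V.stab Set.univ (fun w => G.o (s w)) →
      G.V.act x z (G.o (s z)) = G.V.act x z' (G.o (s z')) := by
    intro x z z' hz' hmem
    obtain ⟨-, -, hzz, hact⟩ := hmem
    calc G.V.act x z (G.o (s z)) = G.V.act x z' (G.V.act z' z (G.o (s z))) :=
          (G.V.act_comp _ hz' hzz (hπos z)).symm
      _ = G.V.act x z' (G.o (s z')) := by rw [hact]
  have hTeq : ∀ {x z z'}, (x, z') ∈ R →
      (z, z') ∈ G.V.stab Set.univ (fun w => G.t (s w)) →
      G.V.act x z (G.t (s z)) = G.V.act x z' (G.t (s z')) := by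
    intro x z z' hz' hmem
    obtain ⟨-, -, hzz, hact⟩ := hmem
    calc G.V.act x z (G.t (s z)) = G.V.act x z' (G.V.act z' z (G.t (s z))) :=
          (G.V.act_comp _ hz' hzz (hπts z)).symm
      _ = G.V.act x z' (G.t (s z')) := by rw [hact]
  -- every edge decomposes as an (o,t) or (t,o) pair of translated section vertices
  have hedge : ∀ e : G.Edg.F, ∃ z, (G.Edg.π e, z) ∈ R ∧
      ((G.o e = G.V.act (G.Edg.π e) z (G.o (s z)) ∧
        G.t e = G.V.act (G.Edg.π e) z (G.t (s z))) ∨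
       (G.o e = G.V.act (G.Edg.π e) z (G.t (s z)) ∧
        G.t e = G.V.act (G.Edg.π e) z (G.o (s z)))) := by
    intro e
    by_cases he : e ∈ P
    · obtain ⟨z, hrel⟩ := hsat e he
      obtain ⟨h1, h2⟩ := hrel
      dsimp only at h1 h2
      rw [hπs] at h1 h2
      refine ⟨z, h1, Or.inl ⟨?_, ?_⟩⟩
      · nth_rewrite 1 [← h2]
        exact G.o_mor.2.2 (s z) h1 (hπs z)
      · nth_rewrite 1 [← h2]
        exact G.t_mor.2.2 (s z) h1 (hπs z)
    · have hbe : G.bar e ∈ P := by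
        by_contra hb
        exact he ((hP.2.1 e).mpr hb)
      obtain ⟨z, hrel⟩ := hsat (G.bar e) hbe
      obtain ⟨h1, h2⟩ := hrel
      dsimp only at h1 h2
      rw [hπs, hπbar] at h1 h2
      refine ⟨z, h1, Or.inr ⟨?_, ?_⟩⟩
      · rw [← ht_bar e]
        nth_rewrite 1 [← h2]
        exact G.t_mor.2.2 (s z) h1 (hπs z)
      · rw [← G.o_bar e]
        nth_rewrite 1 [← h2]
        exact G.o_mor.2.2 (s z) h1 (hπs z)
  have hadjOT : ∀ {x z}, (x, z) ∈ R →
      G.Adj x (G.V.act x z (G.o (s z))) (G.V.act x z (G.t (s z))) := by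
    intro x z h
    exact ⟨G.Edg.act x z (s z), G.Edg.act_proj _ h (hπs z),
      G.o_mor.2.2 (s z) h (hπs z), G.t_mor.2.2 (s z) h (hπs z)⟩
  have hadjsymm : ∀ {x : X} {v w : G.V.F}, G.Adj x v w → G.Adj x w v := by
    rintro x v w ⟨e, hπe, ho, ht⟩
    exact ⟨G.bar e, by rw [hπbar, hπe], by rw [G.o_bar, ht], by rw [ht_bar, ho]⟩
  constructor
  · intro hconn x y
    constructor
    · intro hxy
      -- walk from o (s x) to the translate of o (s y), tracking labels
      have hπvx : G.V.π (G.o (s x)) = x := hπos x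
      have hπvy : G.V.π (G.V.act x y (G.o (s y))) = x := hπO hxy
      have path := hconn x (G.o (s x)) (G.V.act x y (G.o (s y))) hπvx hπvy
      set S' : X → X → Prop := fun a b =>
        (a, b) ∈ G.V.stab Set.univ (fun z => G.o (s z)) ∨
        (a, b) ∈ G.V.stab Set.univ (fun z => G.t (s z)) with hS'
      have key : ∀ w : G.V.F,
          Relation.ReflTransGen (G.Adj x) (G.o (s x)) w →
          ∃ z, (x, z) ∈ R ∧ Relation.EqvGen S' x z ∧
            (w = G.V.act x z (G.o (s z)) ∨ w = G.V.act x z (G.t (s z))) := by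
        intro w hw
        induction hw with
        | refl =>
          exact ⟨x, hrefl x, Relation.EqvGen.refl x,
            Or.inl (G.V.act_id x (G.o (s x)) (hπos x)).symm⟩
        | tail hbc hstep ih =>
          rename_i b c
          obtain ⟨z, hz, hgz, hbz⟩ := ih
          obtain ⟨e, hπe, hoe, hte⟩ := hstep
          obtain ⟨z', hz', hcase⟩ := hedge e
          rw [hπe] at hz' hcase
          rcases hcase with ⟨ho', ht'⟩ | ⟨ho', ht'⟩
          · -- o e is o-type with label z'
            have hbz' : b = G.V.act x z' (G.o (s z')) := hoe.symm.trans ho'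
            rcases hbz with hb | hb
            · have hzz' : (z, z') ∈ G.V.stab Set.univ (fun w => G.o (s w)) :=
                hstabO hz hz' (hb.symm.trans hbz')
              exact ⟨z', hz',
                Relation.EqvGen.trans _ _ _ hgz (Relation.EqvGen.rel _ _ (Or.inl hzz')),
                Or.inr (hte.symm.trans ht')⟩
            · exact absurd (hbz'.symm.trans hb) (hOT hz' hz)
          · -- o e is t-type with label z'
            have hbz' : b = G.V.act x z' (G.t (s z')) := hoe.symm.trans ho'
            rcases hbz with hb | hb
            · exact absurd (hb.symm.trans hbz') (hOT hz hz')
            · have hzz' : (z, z') ∈ G.V.stab Set.univ (fun w => G.t (s w)) :=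
                hstabT hz hz' (hb.symm.trans hbz')
              exact ⟨z', hz',
                Relation.EqvGen.trans _ _ _ hgz (Relation.EqvGen.rel _ _ (Or.inr hzz')),
                Or.inl (hte.symm.trans ht')⟩
      obtain ⟨z, hz, hgz, hvz⟩ := key _ path
      rcases hvz with hv | hv
      · have hzy : (z, y) ∈ G.V.stab Set.univ (fun w => G.o (s w)) :=
          hstabO hz hxy hv.symm
        exact Relation.EqvGen.trans _ _ _ hgz (Relation.EqvGen.rel _ _ (Or.inl hzy))
      · exact absurd hv (hOT hxy hz)
    · intro h
      induction h with
      | rel a b hab => rcases hab with h | h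
                       exacts [hsymm h.2.2.1, hsymm h.2.2.1]
      | refl a => exact hrefl a
      | symm a b _ ih => exact hsymm ih
      | trans a b c _ _ ih1 ih2 => exact htrans ih1 ih2
  · intro hgen x v w hπv hπw
    have hrep : ∀ u : G.V.F, G.V.π u = x → ∃ z, (x, z) ∈ R ∧
        (u = G.V.act x z (G.o (s z)) ∨ u = G.V.act x z (G.t (s z))) := by
      intro u hπu
      have hu : u ∈ G.V.sat (Set.range fun x => G.o (s x)) ∪
          G.V.sat (Set.range fun x => G.t (s x)) := hcover.symm ▸ Set.mem_univ u
      rcases hu with ⟨b, ⟨z, rfl⟩, h1, h2⟩ | ⟨b, ⟨z, rfl⟩, h1, h2⟩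
      · dsimp only at h1 h2
        rw [hπu, hπos] at h1 h2
        exact ⟨z, h1, Or.inl h2.symm⟩
      · dsimp only at h1 h2
        rw [hπu, hπts] at h1 h2
        exact ⟨z, h1, Or.inr h2.symm⟩
    obtain ⟨zv, hzv, hv⟩ := hrep v hπv
    obtain ⟨zw, hzw, hw⟩ := hrep w hπw
    have hzz : Relation.EqvGen (fun a b =>
        (a, b) ∈ G.V.stab Set.univ (fun z => G.o (s z)) ∨
        (a, b) ∈ G.V.stab Set.univ (fun z => G.t (s z))) zv zw :=
      (hgen zv zw).mp (htrans (hsymm hzv) hzw)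
    have hsymAdj : Symmetric (G.Adj x) := fun _ _ h => hadjsymm h
    have key : ∀ z z', Relation.EqvGen (fun a b =>
        (a, b) ∈ G.V.stab Set.univ (fun z => G.o (s z)) ∨
        (a, b) ∈ G.V.stab Set.univ (fun z => G.t (s z))) z z' →
        ((x, z) ∈ R ↔ (x, z') ∈ R) ∧ ((x, z) ∈ R →
          Relation.ReflTransGen (G.Adj x)
            (G.V.act x z (G.o (s z))) (G.V.act x z' (G.o (s z')))) := by
      intro z z' h
      induction h with
      | rel a b hab =>
        rcases hab with h | h
        · have hba := h.2.2.1
          refine ⟨⟨fun hxa => htrans hxa (hsymm hba), fun hxb => htrans hxb hba⟩, ?_⟩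
          intro hxa
          rw [hOeq (htrans hxa (hsymm hba)) h]
        · have hba := h.2.2.1
          have hxb : (x, a) ∈ R → (x, b) ∈ R := fun hxa => htrans hxa (hsymm hba)
          refine ⟨⟨hxb, fun hxb => htrans hxb hba⟩, ?_⟩
          intro hxa
          have h1 : G.V.act x a (G.t (s a)) = G.V.act x b (G.t (s b)) :=
            hTeq (hxb hxa) h
          refine Relation.ReflTransGen.trans
            (Relation.ReflTransGen.single (hadjOT hxa)) ?_
          rw [h1]
          exact Relation.ReflTransGen.single (hadjsymm (hadjOT (hxb hxa)))
      | refl a => exact ⟨Iff.rfl, fun _ => Relation.ReflTransGen.refl⟩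
      | symm a b _ ih =>
        refine ⟨ih.1.symm, fun hxb => ?_⟩
        haveI : Std.Symm (G.Adj x) := ⟨fun _ _ h => hsymAdj h⟩
        exact Std.Symm.symm _ _ (ih.2 (ih.1.symm.mp hxb))
      | trans a b c _ _ ih1 ih2 =>
        refine ⟨ih1.1.trans ih2.1, fun hxa => ?_⟩
        exact (ih1.2 hxa).trans (ih2.2 (ih1.1.mp hxa))
    have hOO := (key zv zw hzz).2 hzv
    have step1 : Relation.ReflTransGen (G.Adj x) v (G.V.act x zv (G.o (s zv))) := by
      rcases hv with hv | hv
      · exact hv ▸ Relation.ReflTransGen.refl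
      · exact hv ▸ Relation.ReflTransGen.single (hadjsymm (hadjOT hzv))
    have step3 : Relation.ReflTransGen (G.Adj x) (G.V.act x zw (G.o (s zw))) w := by
      rcases hw with hw | hw
      · exact hw ▸ Relation.ReflTransGen.refl
      · exact hw ▸ Relation.ReflTransGen.single (hadjOT hzw)
    exact (step1.trans hOO).trans step3
end

section
/- Let F be an R-fibered space over X. If there exists a Borel section s : X → F such that s(X) is a fundamental domain of the induced equivalence relation R_F on F, then F is isomorphic, as an R-fibered space, to the canonical left R-fibered space. -/
open Set

universe u

/-- An `R`-fibered space admitting a Borel section whose image is a fundamental domain of the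
induced relation is isomorphic to the canonical left `R`-fibered space. -/
theorem iso_canonical_of_section_fundamental_domain
    {X : Type u} [MeasurableSpace X] [StandardBorelSpace X]
    {R : Set (X × X)} (hR : IsCBER R) (E : RFibSp X R)
    (s : X → E.F) (hs : E.IsPartialSection Set.univ s)
    -- `s(X)` is a fundamental domain of `R_F` :
    (hfd : ∀ t : E.F, ∃! x : X, (s x, t) ∈ E.rel) :
    ∃ f : E.F → X × X,
      Measurable f ∧ Function.Injective f ∧
      (∀ t : E.F, f t ∈ R) ∧ (∀ p ∈ R, ∃ t : E.F, f t = p) ∧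
      (∀ t : E.F, (f t).1 = E.π t) ∧
      ∀ ⦃x y : X⦄ (t : E.F), (x, y) ∈ R → E.π t = y →
        f (E.act x y t) = (x, (f t).2) := by
  classical
  obtain ⟨-, hs_meas, hs_proj⟩ := hs
  have hsm : Measurable s := by
    have : s = (Set.univ.restrict s) ∘ (fun x : X => (⟨x, mem_univ x⟩ : (Set.univ : Set X))) :=
        rfl
    rw [this]
    exact hs_meas.comp (measurable_id.subtype_mk)
  have hπs : ∀ x : X, E.π (s x) = x := fun x => hs_proj x (mem_univ x)
  obtain ⟨hRmeas, hRrefl, hRsymm, hRtrans, -⟩ := hR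
  -- the forward map
  set g : {p : X × X // p ∈ R} → E.F := fun p => E.act p.val.1 p.val.2 (s p.val.2) with hg
  have hπg : ∀ p : {p : X × X // p ∈ R}, E.π (g p) = p.val.1 := fun ⟨⟨x, y⟩, hp⟩ =>
    E.act_proj _ hp (hπs y)
  have hrelmem : ∀ p : {p : X × X // p ∈ R}, (s p.val.2, g p) ∈ E.rel := by
    rintro ⟨⟨x, y⟩, hp⟩
    have hπ : E.π (g ⟨⟨x, y⟩, hp⟩) = x := hπg _
    refine ⟨?_, ?_⟩
    · rw [hπ, hπs]; exact hp
    · rw [hπ, hπs]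
  -- g is bijective
  have hginj : Function.Injective g := by
    rintro ⟨⟨x, y⟩, hp⟩ ⟨⟨x', y'⟩, hp'⟩ h
    have hx : x = x' := by
      have h1 := hπg ⟨⟨x, y⟩, hp⟩
      have h2 := hπg ⟨⟨x', y'⟩, hp'⟩
      rw [h] at h1
      exact h1.symm.trans h2
    have hy : y = y' := by
      have h1 := hrelmem ⟨⟨x, y⟩, hp⟩
      have h2 := hrelmem ⟨⟨x', y'⟩, hp'⟩
      rw [← h] at h2
      exact ((hfd (g ⟨⟨x, y⟩, hp⟩)).unique h1 h2)
    simp [hx, hy]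
  have hgsurj : Function.Surjective g := by
    intro t
    obtain ⟨x, hx, -⟩ := hfd t
    obtain ⟨hx1, hx2⟩ := hx
    rw [hπs] at hx1 hx2
    exact ⟨⟨⟨E.π t, x⟩, hx1⟩, hx2⟩
  -- g is measurable
  haveI : StandardBorelSpace {p : X × X // p ∈ R} := hRmeas.standardBorel
  have hgmeas : Measurable g := by
    have h1 : Measurable fun p : {p : X × X // p ∈ R} =>
        (⟨(p.val, s p.val.2), p.property, hπs p.val.2⟩ :
          {q : (X × X) × E.F // q.1 ∈ R ∧ E.π q.2 = q.1.2}) := by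
      apply Measurable.subtype_mk
      exact (measurable_subtype_coe).prodMk (hsm.comp (measurable_snd.comp measurable_subtype_coe))
    exact E.measurable_act.comp h1
  have hemb : MeasurableEmbedding g := hgmeas.measurableEmbedding hginj
  set e := Equiv.ofBijective g ⟨hginj, hgsurj⟩ with he
  have hsymmg : ∀ q, e.symm (g q) = q := fun q => (e.symm_apply_eq).mpr rfl
  have hesymm : Measurable e.symm := by
    intro u hu
    have : e.symm ⁻¹' u = g '' u := by
      ext t
      simp only [mem_preimage, mem_image]
      constructor
      · intro h
        exact ⟨e.symm t, h, e.apply_symm_apply t⟩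
      · rintro ⟨p, hp, rfl⟩
        rwa [hsymmg]
    rw [this]
    exact hemb.measurableSet_image' hu
  refine ⟨fun t => (e.symm t).val, measurable_subtype_coe.comp hesymm, ?_, ?_, ?_, ?_, ?_⟩
  · intro t t' h
    exact e.symm.injective (Subtype.ext h)
  · exact fun t => (e.symm t).property
  · intro p hp
    refine ⟨g ⟨p, hp⟩, ?_⟩
    show (e.symm (g ⟨p, hp⟩) : X × X) = p
    rw [hsymmg]
  · intro t
    have h1 := hπg (e.symm t)
    have ht : g (e.symm t) = t := e.apply_symm_apply t
    rw [ht] at h1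
    exact h1.symm
  · intro x y t hxy hπt
    set p := e.symm t with hpdef
    have ht : g p = t := e.apply_symm_apply t
    have hp1 : p.val.1 = y := by rw [← hπt, ← ht, hπg]
    have hyp2 : (y, p.val.2) ∈ R := by rw [← hp1]; exact p.property
    have hmem : (x, p.val.2) ∈ R := hRtrans hxy hyp2
    have key : E.act x y t = g ⟨(x, p.val.2), hmem⟩ := by
      conv_lhs => rw [← ht]
      show E.act x y (E.act p.val.1 p.val.2 (s p.val.2)) = E.act x p.val.2 (s p.val.2)
      rw [hp1]
      exact E.act_comp _ hxy hyp2 (hπs _)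
    show (e.symm (E.act x y t) : X × X) = (x, (e.symm t : X × X).2)
    rw [key, hsymmg]
end

section
/- Let F₁ and F₂ be R-fibered spaces over X, let A ⊆ X be a complete domain of R, and let s₁ : A → F₁ and s₂ : A → F₂ be partial sections with s₁ saturating. Then there exists a morphism f : F₁ → F₂ of R-fibered spaces with f ∘ s₁ = s₂ if and only if Stab_R(s₁) is a subrelation of Stab_R(s₂). If moreover s₂ is saturating, then any such morphism f is surjective. -/
open Set

universe u

open MeasureTheory in
private lemma measurableSet_eq_fun'' {δ γ : Type*} [MeasurableSpace δ] [MeasurableSpace γ]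
    [StandardBorelSpace γ] {g h : δ → γ} (hg : Measurable g) (hh : Measurable h) :
    MeasurableSet {x | g x = h x} := by
  letI := upgradeStandardBorel γ
  exact (hg.prodMk hh) isClosed_diagonal.measurableSet

open MeasureTheory in
private lemma aux_measurable {X : Type u} [MeasurableSpace X] [StandardBorelSpace X]
    {R : Set (X × X)}
    (E1 E2 : RFibSp X R) (A : Set X) (hAm : MeasurableSet A) (hRm : MeasurableSet R)
    (s1 : X → E1.F) (s2 : X → E2.F)
    (hs1m : Measurable (A.restrict s1)) (hs2m : Measurable (A.restrict s2))
    (hs1π : ∀ x ∈ A, E1.π (s1 x) = x) (hs2π : ∀ x ∈ A, E2.π (s2 x) = x)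
    (f : E1.F → E2.F) (c : E1.F → X)
    (hcA : ∀ t, c t ∈ A) (hcR : ∀ t, (E1.π t, c t) ∈ R)
    (hcact : ∀ t, E1.act (E1.π t) (c t) (s1 (c t)) = t)
    (hwd : ∀ (t : E1.F) (x : X), x ∈ A → (E1.π t, x) ∈ R →
      E1.act (E1.π t) x (s1 x) = t → E2.act (E1.π t) x (s2 x) = f t) :
    Measurable f := by
  have hf : ∀ t, f t = E2.act (E1.π t) (c t) (s2 (c t)) :=
    fun t => (hwd t (c t) (hcA t) (hcR t) (hcact t)).symm
  set S : Set (E1.F × X) := {p | p.2 ∈ A ∧ (E1.π p.1, p.2) ∈ R} with hSdef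
  have hSm : MeasurableSet S := by
    have h1 : MeasurableSet {p : E1.F × X | p.2 ∈ A} := measurable_snd hAm
    have h2 : MeasurableSet {p : E1.F × X | (E1.π p.1, p.2) ∈ R} :=
      ((E1.measurable_π.comp measurable_fst).prodMk measurable_snd) hRm
    exact h1.inter h2
  haveI : StandardBorelSpace ↥S := hSm.standardBorel
  have hv : Measurable (Subtype.val : ↥S → E1.F × X) := measurable_subtype_coe
  have hfst : Measurable fun p : ↥S => p.1.1 := measurable_fst.comp hv
  have hsnd : Measurable fun p : ↥S => p.1.2 := measurable_snd.comp hv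
  have hmem : Measurable fun p : ↥S => (⟨p.1.2, p.2.1⟩ : ↥A) := hsnd.subtype_mk
  have hs1c : Measurable fun p : ↥S => s1 p.1.2 := hs1m.comp hmem
  have hs2c : Measurable fun p : ↥S => s2 p.1.2 := hs2m.comp hmem
  set w1 : ↥S → E1.F := fun p => E1.act (E1.π p.1.1) p.1.2 (s1 p.1.2) with hw1def
  set w2 : ↥S → E2.F := fun p => E2.act (E1.π p.1.1) p.1.2 (s2 p.1.2) with hw2def
  have hw1 : Measurable w1 := by
    have harg : Measurable fun p : ↥S =>
        (⟨((E1.π p.1.1, p.1.2), s1 p.1.2), ⟨p.2.2, hs1π _ p.2.1⟩⟩ :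
          {q : (X × X) × E1.F // q.1 ∈ R ∧ E1.π q.2 = q.1.2}) :=
      (((E1.measurable_π.comp hfst).prodMk hsnd).prodMk hs1c).subtype_mk
    exact E1.measurable_act.comp harg
  have hw2 : Measurable w2 := by
    have harg : Measurable fun p : ↥S =>
        (⟨((E1.π p.1.1, p.1.2), s2 p.1.2), ⟨p.2.2, hs2π _ p.2.1⟩⟩ :
          {q : (X × X) × E2.F // q.1 ∈ R ∧ E2.π q.2 = q.1.2}) :=
      (((E1.measurable_π.comp hfst).prodMk hsnd).prodMk hs2c).subtype_mk
    exact E2.measurable_act.comp harg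
  have hT1 : MeasurableSet {p : ↥S | w1 p = p.1.1} := measurableSet_eq_fun'' hw1 hfst
  set Γ : Set (E1.F × E2.F) := {p | p.2 = f p.1} with hΓdef
  -- the graph as an image
  have hΓ1 : Γ = (fun p : ↥S => (p.1.1, w2 p)) '' {p : ↥S | w1 p = p.1.1} := by
    ext ⟨t, u⟩
    constructor
    · intro (h : u = f t)
      exact ⟨⟨(t, c t), hcA t, hcR t⟩, hcact t, by
        simp only [w2]; rw [← hf t, ← h]⟩
    · rintro ⟨⟨⟨t', x⟩, hx, hr⟩, heq, h2⟩
      have h3 : t' = t := congrArg Prod.fst h2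
      subst h3
      have h4 : u = w2 ⟨(t', x), hx, hr⟩ := (congrArg Prod.snd h2).symm
      show u = f t'
      rw [h4]
      exact hwd t' x hx hr heq
  have hΓ2 : Γᶜ = (fun q : ↥S × E2.F => (q.1.1.1, q.2)) ''
      {q : ↥S × E2.F | w1 q.1 = q.1.1.1 ∧ q.2 ≠ w2 q.1} := by
    ext ⟨t, u⟩
    constructor
    · intro (h : ¬ u = f t)
      refine ⟨(⟨(t, c t), hcA t, hcR t⟩, u), ⟨hcact t, ?_⟩, rfl⟩
      show u ≠ w2 ⟨(t, c t), hcA t, hcR t⟩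
      rw [hf t] at h
      exact h
    · rintro ⟨⟨⟨⟨t', x⟩, hx, hr⟩, u'⟩, ⟨heq, hne⟩, h2⟩
      have h3 : t' = t := congrArg Prod.fst h2
      subst h3
      have h4 : u = u' := (congrArg Prod.snd h2).symm
      subst h4
      show ¬ u = f t'
      intro hcon
      exact hne (by rw [hcon, ← hwd t' x hx hr heq])
  have hGm : MeasurableSet Γ := by
    letI := upgradeStandardBorel (E1.F × E2.F)
    apply AnalyticSet.measurableSet_of_compl
    · rw [hΓ1]
      exact hT1.analyticSet_image (hfst.prodMk hw2)
    · rw [hΓ2]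
      have hset : MeasurableSet {q : ↥S × E2.F | w1 q.1 = q.1.1.1 ∧ q.2 ≠ w2 q.1} := by
        have h1 : MeasurableSet {q : ↥S × E2.F | w1 q.1 = q.1.1.1} :=
          measurableSet_eq_fun'' (hw1.comp measurable_fst) (hfst.comp measurable_fst)
        have h2 : MeasurableSet {q : ↥S × E2.F | q.2 = w2 q.1} :=
          measurableSet_eq_fun'' measurable_snd (hw2.comp measurable_fst)
        exact h1.inter h2.compl
      exact hset.analyticSet_image ((hfst.comp measurable_fst).prodMk measurable_snd)
  intro B hB
  have himg : f ⁻¹' B = Prod.fst '' (Γ ∩ (univ ×ˢ B)) := by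
    ext t
    constructor
    · intro h
      exact ⟨(t, f t), ⟨rfl, trivial, h⟩, rfl⟩
    · rintro ⟨⟨a, b⟩, ⟨(hb : b = f a), -, hBb⟩, rfl⟩
      show f a ∈ B
      rwa [hb] at hBb
  rw [himg]
  apply MeasurableSet.image_of_measurable_injOn (hGm.inter (MeasurableSet.univ.prod hB))
    measurable_fst
  rintro ⟨a, b⟩ ⟨(hb : b = f a), -⟩ ⟨a', b'⟩ ⟨(hb' : b' = f a'), -⟩ (h : a = a')
  subst h
  rw [Prod.mk.injEq]
  exact ⟨rfl, hb.trans hb'.symm⟩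

/-- Given partial sections `s₁`, `s₂` of `R`-fibered spaces `E₁`, `E₂` on a complete domain `A`
of `R`, with `s₁` saturating, a morphism sending `s₁` to `s₂` exists iff `Stab(s₁) ⊆ Stab(s₂)`;
if `s₂` is also saturating, any such morphism is surjective. -/
theorem exists_morphism_iff_stab_le
    {X : Type u} [MeasurableSpace X] [StandardBorelSpace X]
    {R : Set (X × X)} (hR : IsCBER R)
    (E1 E2 : RFibSp X R) (A : Set X) (hA : IsCompleteDomain R A)
    (s1 : X → E1.F) (s2 : X → E2.F)
    (h1 : E1.IsPartialSection A s1) (h2 : E2.IsPartialSection A s2)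
    (hsat1 : E1.IsSaturating A s1) :
    ((∃ f : E1.F → E2.F, RFibSp.IsMorphism E1 E2 f ∧ ∀ x ∈ A, f (s1 x) = s2 x) ↔
      E1.stab A s1 ⊆ E2.stab A s2) ∧
    (E2.IsSaturating A s2 →
      ∀ f : E1.F → E2.F, RFibSp.IsMorphism E1 E2 f → (∀ x ∈ A, f (s1 x) = s2 x) →
        Function.Surjective f) := by
  
  obtain ⟨hRm, hRrefl, hRsymm, hRtrans, hRcount⟩ := hR
  obtain ⟨hAm, -, -⟩ := hA
  obtain ⟨-, hs1m, hs1π⟩ := h1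
  obtain ⟨-, hs2m, hs2π⟩ := h2
  constructor
  · constructor
    · rintro ⟨f, ⟨fmeas, fπ, fact⟩, hfs⟩ ⟨x, y⟩ ⟨hx, hy, hxy, hact⟩
      refine ⟨hx, hy, hxy, ?_⟩
      have h5 := fact (s1 x) hxy (hs1π x hx)
      rw [← hfs y hy, ← hact, h5, hfs x hx]
    · intro hstab
      -- choose, for every t, a point of A whose section value generates t
      have hch : ∀ t : E1.F, ∃ x, x ∈ A ∧ (E1.π t, x) ∈ R ∧ E1.act (E1.π t) x (s1 x) = t := by
        intro t
        obtain ⟨x, hx, h1', h2'⟩ := hsat1 t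
        rw [hs1π x hx] at h1' h2'
        exact ⟨x, hx, h1', h2'⟩
      choose c hcA hcR hcact using hch
      set f : E1.F → E2.F := fun t => E2.act (E1.π t) (c t) (s2 (c t)) with hfdef
      -- well-definedness
      have hwd2 : ∀ (t : E1.F) (x y : X), x ∈ A → y ∈ A → (E1.π t, x) ∈ R → (E1.π t, y) ∈ R →
          E1.act (E1.π t) x (s1 x) = t → E1.act (E1.π t) y (s1 y) = t →
          E2.act (E1.π t) x (s2 x) = E2.act (E1.π t) y (s2 y) := by
        intro t x y hx hy hrx hry hax hay
        have hyx : (y, x) ∈ R := hRtrans (hRsymm hry) hrx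
        have hstab1 : (x, y) ∈ E1.stab A s1 := by
          refine ⟨hx, hy, hyx, ?_⟩
          show E1.act y x (s1 x) = s1 y
          calc E1.act y x (s1 x)
              = E1.act y (E1.π t) (E1.act (E1.π t) x (s1 x)) :=
                (E1.act_comp (s1 x) (hRsymm hry) hrx (hs1π x hx)).symm
            _ = E1.act y (E1.π t) (E1.act (E1.π t) y (s1 y)) := by rw [hax, hay]
            _ = s1 y := by
                rw [E1.act_comp (s1 y) (hRsymm hry) hry (hs1π y hy),
                  E1.act_id y (s1 y) (hs1π y hy)]
        have hstab2 := hstab hstab1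
        have e2 : E2.act y x (s2 x) = s2 y := hstab2.2.2.2
        rw [← e2, E2.act_comp (s2 x) hry hyx (hs2π x hx)]
      have hwd : ∀ (t : E1.F) (x : X), x ∈ A → (E1.π t, x) ∈ R →
          E1.act (E1.π t) x (s1 x) = t → E2.act (E1.π t) x (s2 x) = f t :=
        fun t x hx hr ha => hwd2 t x (c t) hx (hcA t) hr (hcR t) ha (hcact t)
      have hπf : ∀ t, E2.π (f t) = E1.π t :=
        fun t => E2.act_proj (s2 (c t)) (hcR t) (hs2π _ (hcA t))
      refine ⟨f, ⟨?_, hπf, ?_⟩, ?_⟩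
      · exact aux_measurable E1 E2 A hAm hRm s1 s2 hs1m hs2m hs1π hs2π f c hcA hcR hcact hwd
      · -- equivariance
        intro x y t hxy hπt
        set t' := E1.act x y t with ht'def
        have hπt' : E1.π t' = x := E1.act_proj t hxy hπt
        have hyc : (y, c t) ∈ R := by rw [← hπt]; exact hcR t
        have hxc : (x, c t) ∈ R := hRtrans hxy hyc
        have hE1 : E1.act (E1.π t') (c t) (s1 (c t)) = t' := by
          rw [hπt']
          have e1 : E1.act x (c t) (s1 (c t)) =
              E1.act x y (E1.act y (c t) (s1 (c t))) :=
            (E1.act_comp (s1 (c t)) hxy hyc (hs1π _ (hcA t))).symm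
          rw [e1]
          congr 1
          have := hcact t
          rw [hπt] at this
          exact this
        have key : E2.act (E1.π t') (c t) (s2 (c t)) = f t' :=
          hwd t' (c t) (hcA t) (by rw [hπt']; exact hxc) hE1
        rw [← key, hπt']
        show E2.act x (c t) (s2 (c t)) = E2.act x y (f t)
        have e2 : E2.act x y (f t) = E2.act x y (E2.act y (c t) (s2 (c t))) := by
          simp only [hfdef, hπt]
        rw [e2, E2.act_comp (s2 (c t)) hxy hyc (hs2π _ (hcA t))]
      · -- f ∘ s1 = s2 on A
        intro x hx
        have hπ1 : E1.π (s1 x) = x := hs1π x hx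
        have hE1 : E1.act (E1.π (s1 x)) x (s1 x) = s1 x := by
          rw [hπ1]; exact E1.act_id x (s1 x) hπ1
        have := hwd (s1 x) x hx (by rw [hπ1]; exact hRrefl x) hE1
        rw [← this, hπ1, E2.act_id x (s2 x) (hs2π x hx)]
  · rintro hsat2 f ⟨fmeas, fπ, fact⟩ hfs t2
    obtain ⟨x, hx, hr, hact⟩ := hsat2 t2
    rw [hs2π x hx] at hr hact
    refine ⟨E1.act (E2.π t2) x (s1 x), ?_⟩
    rw [fact (s1 x) hr (hs1π x hx), hfs x hx, hact]
end

section
/- Let S be a countable Borel equivalence relation on a standard Borel space Y acting on an S-arboretum B over Y. Suppose there is a saturating Borel section d : Y → B⁰ of the vertex space, with stabilizer S' = Stab_S(d). Let (s_a)_{a∈A} be a countable family of partial sections s_a : A_a → B¹ of the edge space (the extra-edges) such that: (1) o(s_a(x)) ∈ d(Y) for every a and every x ∈ A_a; (2) for each a there is an element φ_a : A_a → B_a of the full pseudogroup [[S]] with (φ_a(x), x)·t(s_a(x)) = d(φ_a(x)) for every x ∈ A_a; (3) the union of the images s_a(A_a) is a complete domain of the induced equivalence relation S_{B¹} on B¹.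 Then S is the smallest equivalence relation containing S' and the equivalence relation S'' generated by the graphs of the φ_a. -/
open Set

universe u

/-- If an `S`-arboretum has a saturating vertex section `d` with stabilizer `S'`, and a
countable family of extra-edge partial sections whose origins lie on `d`, whose terminal
vertices are carried back to `d` by partial isomorphisms `φ_a` of `[[S]]`, and whose images
together form a complete domain of the induced relation on the edge space, then `S` is the
smallest equivalence relation containing `S'` and the relation generated by the `φ_a`. -/
theorem generated_by_vertex_stabilizer_and_extra_edges
    {Y : Type u} [MeasurableSpace Y] [StandardBorelSpace Y]
    {S : Set (Y × Y)} (hS : IsCBER S)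
    (G : RGraphField Y S) (hArb : G.IsArboretum)
    (d : Y → G.V.F) (hd : G.V.IsPartialSection Set.univ d)
    (hdsat : G.V.IsSaturating Set.univ d)
    {ι : Type*} [Countable ι]
    (Aa : ι → Set Y) (sa : ι → Y → G.Edg.F)
    (hsa : ∀ a, G.Edg.IsPartialSection (Aa a) (sa a))
    (φ : ι → Y → Y) (hφ : ∀ a, MemPseudoGroup S (Aa a) (φ a))
    -- (1) origins of the extra-edges lie on the section `d` :
    (h1 : ∀ a, ∀ x ∈ Aa a, ∃ y : Y, G.o (sa a x) = d y)
    -- (2) `φ_a` carries the terminal vertices of the extra-edges back to `d` :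
    (h2 : ∀ a, ∀ x ∈ Aa a, G.V.act (φ a x) x (G.t (sa a x)) = d (φ a x))
    -- (3) the union of the images of the extra-edges is a complete domain of `S_{B¹}` :
    (h3 : ∀ e : G.Edg.F, ∃ a, ∃ x ∈ Aa a, (sa a x, e) ∈ G.Edg.rel) :
    ∀ u v : Y, (u, v) ∈ S ↔
      Relation.EqvGen (fun p q =>
        (p, q) ∈ G.V.stab Set.univ d ∨ ∃ a, p ∈ Aa a ∧ φ a p = q) u v := by
  obtain ⟨hSmeas, hSrefl, hSsymm, hStrans, hScnt⟩ := hS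
  have hdπ : ∀ x, G.V.π (d x) = x := fun x => hd.2.2 x (mem_univ x)
  set r : Y → Y → Prop := fun p q =>
    (p, q) ∈ G.V.stab Set.univ d ∨ ∃ a, p ∈ Aa a ∧ φ a p = q with hr
  intro u v
  constructor
  · intro huv
    -- cancellation helper
    have cancel : ∀ {p q : Y}, (u, p) ∈ S → (u, q) ∈ S →
        G.V.act u p (d p) = G.V.act u q (d q) → G.V.act q p (d p) = d q := by
      intro p q hp hq h
      have h1 : G.V.act q u (G.V.act u p (d p)) = G.V.act q p (d p) :=
        G.V.act_comp (d p) (hSsymm hq) hp (hdπ p)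
      have h2 : G.V.act q u (G.V.act u q (d q)) = G.V.act q q (d q) :=
        G.V.act_comp (d q) (hSsymm hq) hq (hdπ q)
      rw [h, h2, G.V.act_id q (d q) (hdπ q)] at h1
      exact h1.symm
    have stab_of : ∀ {p q : Y}, (u, p) ∈ S → (u, q) ∈ S →
        G.V.act u p (d p) = G.V.act u q (d q) →
        (p, q) ∈ G.V.stab Set.univ d := by
      intro p q hp hq h
      exact ⟨mem_univ p, mem_univ q, hStrans (hSsymm hq) hp, cancel hp hq h⟩
    have key : ∀ c : G.V.F, Relation.ReflTransGen (G.Adj u) (d u) c →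
        ∀ z, (u, z) ∈ S → G.V.act u z (d z) = c → Relation.EqvGen r u z := by
      intro c hc
      induction hc with
      | refl =>
        intro z hz hzc
        have : (z, u) ∈ G.V.stab Set.univ d :=
          ⟨mem_univ z, mem_univ u, hz, hzc⟩
        exact Relation.EqvGen.symm _ _ (Relation.EqvGen.rel _ _ (Or.inl this))
      | tail hab hbc ih =>
        intro z hz hzc
        obtain ⟨e, heπ, heo, het⟩ := hbc
        have hπb : G.V.π (G.o e) = u := by rw [G.o_mor.2.1 e, heπ]
        obtain ⟨x, -, hx⟩ := hdsat (G.o e)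
        have hxu : (u, x) ∈ S := by have := hx.1; rwa [hπb, hdπ] at this
        have hxb : G.V.act u x (d x) = G.o e := by
          have := hx.2; rwa [hπb, hdπ] at this
        have hux : Relation.EqvGen r u x := ih x hxu (heo ▸ hxb)
        -- edge analysis
        obtain ⟨a, w, hwA, hw⟩ := h3 e
        have hsπ : G.Edg.π (sa a w) = w := (hsa a).2.2 w hwA
        have hSuw : (u, w) ∈ S := by have := hw.1; rwa [heπ, hsπ] at this
        have he : G.Edg.act u w (sa a w) = e := by
          have := hw.2; rwa [heπ, hsπ] at this
        -- origin of the extra edge lies on d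
        obtain ⟨y, hy⟩ := h1 a w hwA
        have hyw : G.o (sa a w) = d w := by
          have hpy : G.V.π (G.o (sa a w)) = G.Edg.π (sa a w) := G.o_mor.2.1 _
          rw [hy, hdπ, hsπ] at hpy
          rw [hy, hpy]
        have hoe : G.V.act u w (d w) = G.o e := by
          rw [← he, G.o_mor.2.2 (sa a w) hSuw hsπ, hyw]
        -- x ~ w via the stabilizer
        have hxw : (w, x) ∈ G.V.stab Set.univ d :=
          stab_of hSuw hxu (hoe.trans hxb.symm)
        -- w ~ φ a w via the generator
        have hwφ : Relation.EqvGen r w (φ a w) :=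
          Relation.EqvGen.rel _ _ (Or.inr ⟨a, hwA, rfl⟩)
        -- terminal vertex
        have hSwφ : (w, φ a w) ∈ S := (hφ a).2.2.2 w hwA
        have htsπ : G.V.π (G.t (sa a w)) = w := by rw [G.t_mor.2.1, hsπ]
        have hte : G.V.act u (φ a w) (d (φ a w)) = G.t e := by
          rw [← h2 a w hwA,
            G.V.act_comp (G.t (sa a w)) (hStrans hSuw hSwφ) (hSsymm hSwφ) htsπ,
            ← G.t_mor.2.2 (sa a w) hSuw hsπ, he]
        have hφz : (φ a w, z) ∈ G.V.stab Set.univ d :=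
          stab_of (hStrans hSuw hSwφ) hz (hte.trans (het ▸ hzc).symm)
        have e1 : Relation.EqvGen r x w :=
          Relation.EqvGen.symm _ _ (Relation.EqvGen.rel _ _ (Or.inl hxw))
        have e2 : Relation.EqvGen r (φ a w) z :=
          Relation.EqvGen.rel _ _ (Or.inl hφz)
        exact Relation.EqvGen.trans _ _ _ hux
          (Relation.EqvGen.trans _ _ _ e1
            (Relation.EqvGen.trans _ _ _ hwφ e2))
    have hπw : G.V.π (G.V.act u v (d v)) = u := G.V.act_proj (d v) huv (hdπ v)
    exact key (G.V.act u v (d v))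
      ((hArb u).1 (d u) (G.V.act u v (d v)) (hdπ u) hπw) v huv rfl
  · intro h
    induction h with
    | rel p q hpq =>
      rcases hpq with h | ⟨a, ha, hq⟩
      · exact hSsymm h.2.2.1
      · exact hq ▸ (hφ a).2.2.2 p ha
    | refl p => exact hSrefl p
    | symm p q _ ih => exact hSsymm ih
    | trans p q w _ _ ih1 ih2 => exact hStrans ih1 ih2
end
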